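/- arXiv:2012.10687 — 11 statements merged into one kernel-verified Lean document; each statement's English description precedes it below -/
import Mathlib

section
/- Let S be an M×N real matrix and suppose that for each metabolite m there is a prescribed set C(m) ⊆ {1,...,N} of 'child' reactions, and that R is an N×M matrix with R_{jm} = 0 unless j ∈ C(m), the nonzero entries R_{jm} = r_{jm} being algebraically independent indeterminates. Then det(SR), viewed as a polynomial in the r_{jm}, equals Σ_J det(S^J) · Π_m r_{J(m),m}, where the sum ranges over all injective maps J : {1,...,M} → {1,...,N} with J(m) ∈ C(m) for all m (Child Selections), and S^J is the M×M matrix whose m-th column is column J(m) of S. -/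
open scoped Classical

lemma det_mul_expand {α : Type*} [CommRing α] (M N : ℕ)
    (A : Matrix (Fin M) (Fin N) α) (B : Matrix (Fin N) (Fin M) α) :
    (A * B).det = ∑ r : Fin M → Fin N, (∏ i, A i (r i)) * (B.submatrix r id).det := by
  have h : (A * B) = Matrix.of fun i => ∑ j, A i j • B j := by
    ext i k; simp [Matrix.mul_apply]
  rw [h]
  calc ((Matrix.of fun i => ∑ j, A i j • B j : Matrix (Fin M) (Fin M) α)).det
      = Matrix.detRowAlternating (fun i => ∑ j : Fin N, A i j • B j) := rfl
    _ = ∑ r : Fin M → Fin N, Matrix.detRowAlternating (fun i => A i (r i) • B (r i)) :=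
        Matrix.detRowAlternating.toMultilinearMap.map_sum (g := fun i j => A i j • B j)
    _ = ∑ r : Fin M → Fin N, (∏ i, A i (r i)) * (B.submatrix r id).det := by
        refine Finset.sum_congr rfl fun r _ => ?_
        show Matrix.detRowAlternating.toMultilinearMap (fun i => A i (r i) • B (r i)) = _
        rw [MultilinearMap.map_smul_univ, smul_eq_mul]
        rfl

/-- Child Selection expansion of the Jacobian determinant:
det(SR) = Σ_J det(S^J) · Π_m r_{J(m),m}, where the r_{jm} are indeterminates
supported on the child pairs and J ranges over Child Selections. -/
theorem stmt2 (M N : ℕ) (S : Matrix (Fin M) (Fin N) ℝ)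
    (C : Fin M → Finset (Fin N))
    (R : Matrix (Fin N) (Fin M) (MvPolynomial (Fin N × Fin M) ℝ))
    (hR : ∀ j m, R j m = if j ∈ C m then MvPolynomial.X (j, m) else 0) :
    (S.map MvPolynomial.C * R).det =
      ∑ J : {J : Fin M → Fin N // Function.Injective J ∧ ∀ m, J m ∈ C m},
        MvPolynomial.C (S.submatrix id J.1).det *
          ∏ m : Fin M, MvPolynomial.X (J.1 m, m) := by
  classical
  have key : (S.map MvPolynomial.C * R).det
      = ∑ r : Fin M → Fin N,
          (∏ m, R (r m) m) * MvPolynomial.C ((S.submatrix id r).det) := by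
    change Matrix.det (@HMul.hMul (Matrix (Fin M) (Fin N) (MvPolynomial (Fin N × Fin M) ℝ))
      (Matrix (Fin N) (Fin M) (MvPolynomial (Fin N × Fin M) ℝ))
      (Matrix (Fin M) (Fin M) (MvPolynomial (Fin N × Fin M) ℝ)) _ (S.map MvPolynomial.C) R) = _
    rw [← Matrix.det_transpose, Matrix.transpose_mul,
      det_mul_expand M N R.transpose (S.map MvPolynomial.C).transpose]
    refine Finset.sum_congr rfl fun r _ => ?_
    congr 1
    have h1 : ((S.map MvPolynomial.C).transpose.submatrix r id)
        = ((S.submatrix id r).map (MvPolynomial.C :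
            ℝ →+* MvPolynomial (Fin N × Fin M) ℝ)).transpose := by
      ext i j; rfl
    rw [h1, Matrix.det_transpose]
    exact (RingHom.map_det MvPolynomial.C _).symm
  rw [key]
  have hzero : ∀ r ∉ Finset.univ.filter
      (fun r : Fin M → Fin N => Function.Injective r ∧ ∀ m, r m ∈ C m),
      (∏ m, R (r m) m) * MvPolynomial.C ((S.submatrix id r).det) = 0 := by
    intro r hr
    simp only [Finset.mem_filter, Finset.mem_univ, true_and] at hr
    rw [not_and_or] at hr
    rcases hr with hinj | hC
    · have : (S.submatrix id r).det = 0 := by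
        rw [Function.not_injective_iff] at hinj
        obtain ⟨i, j, hij, hne⟩ := hinj
        rw [← Matrix.det_transpose]
        exact Matrix.det_zero_of_row_eq hne (by ext k; simp [Matrix.submatrix, hij])
      simp [this]
    · push_neg at hC
      obtain ⟨m, hm⟩ := hC
      have : R (r m) m = 0 := by rw [hR]; simp [hm]
      exact mul_eq_zero_of_left (Finset.prod_eq_zero (f := fun m' => R (r m') m') (Finset.mem_univ m) this) _
  rw [← Finset.sum_subset (Finset.filter_subset _ Finset.univ) (fun r _ hr => hzero r hr)]
  rw [Finset.sum_subtype (p := fun J : Fin M → Fin N => Function.Injective J ∧ ∀ m, J m ∈ C m) _ (fun x => by simp)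
    (fun r => (∏ m, R (r m) m) * MvPolynomial.C ((S.submatrix id r).det))]
  refine Finset.sum_congr rfl fun J _ => ?_
  have hx : ∀ m, R (J.1 m) m = MvPolynomial.X (J.1 m, m) := fun m => by
    rw [hR]; simp [J.2.2 m]
  rw [Finset.prod_congr rfl fun m _ => hx m, mul_comm]
end

section
/- With S, R, and Child Selections as above (entries r_{jm} treated as indeterminates), det(SR) is a nonzero polynomial in the variables r_{jm} if and only if there exists a Child Selection J with det(S^J) ≠ 0. -/
open scoped Classical

theorem expand (M N : ℕ) (S : Matrix (Fin M) (Fin N) ℝ)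
    (C : Fin M → Finset (Fin N))
    (R : Matrix (Fin N) (Fin M) (MvPolynomial (Fin N × Fin M) ℝ))
    (hR : ∀ j m, R j m = if j ∈ C m then MvPolynomial.X (j, m) else 0) :
    (S.map MvPolynomial.C * R).det =
      ∑ r ∈ Fintype.piFinset C,
        (∏ m, MvPolynomial.X (r m, m)) * MvPolynomial.C ((S.submatrix id r).det) := by
  classical
  show Matrix.det (@HMul.hMul _ _ (Matrix (Fin M) (Fin M) (MvPolynomial (Fin N × Fin M) ℝ)) Matrix.instHMulOfFintypeOfMulOfAddCommMonoid (S.map MvPolynomial.C) R) = _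
  rw [← Matrix.det_transpose]
  have hT : (@HMul.hMul _ _ (Matrix (Fin M) (Fin M) (MvPolynomial (Fin N × Fin M) ℝ)) Matrix.instHMulOfFintypeOfMulOfAddCommMonoid (S.map MvPolynomial.C) R).transpose =
      fun m => ∑ j ∈ C m,
        (MvPolynomial.X (j, m) : MvPolynomial (Fin N × Fin M) ℝ) •
          (fun m1 => MvPolynomial.C (S m1 j)) := by
    funext m m1
    rw [Finset.sum_apply]
    simp only [Matrix.transpose_apply, Matrix.mul_apply, Matrix.map_apply, hR,
      mul_ite, mul_zero, Pi.smul_apply, smul_eq_mul]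
    rw [← Finset.sum_filter]
    refine Finset.sum_congr ?_ fun j _ => mul_comm _ _
    simp
  rw [hT]
  have hdet : ∀ (A : Matrix (Fin M) (Fin M) (MvPolynomial (Fin N × Fin M) ℝ)),
      A.det = (Matrix.detRowAlternating
        (R := MvPolynomial (Fin N × Fin M) ℝ)).toMultilinearMap A := fun _ => rfl
  refine (hdet _).trans ?_
  rw [MultilinearMap.map_sum_finset]
  refine Finset.sum_congr rfl fun r _ => ?_
  rw [MultilinearMap.map_smul_univ]
  rw [smul_eq_mul]
  congr 1
  refine (hdet _).symm.trans ?_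
  have h2 : (fun i m1 => (MvPolynomial.C (S m1 (r i)) : MvPolynomial (Fin N × Fin M) ℝ)) =
      (((S.submatrix id r).map MvPolynomial.C).transpose) := rfl
  rw [h2, Matrix.det_transpose]; exact ((MvPolynomial.C : ℝ →+* MvPolynomial (Fin N × Fin M) ℝ).map_det _).symm

/-- det(SR) is a nonzero polynomial in the indeterminates r_{jm}
iff there exists a Child Selection J with det(S^J) ≠ 0. -/
theorem stmt3 (M N : ℕ) (S : Matrix (Fin M) (Fin N) ℝ)
    (C : Fin M → Finset (Fin N))
    (R : Matrix (Fin N) (Fin M) (MvPolynomial (Fin N × Fin M) ℝ))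
    (hR : ∀ j m, R j m = if j ∈ C m then MvPolynomial.X (j, m) else 0) :
    (S.map MvPolynomial.C * R).det ≠ 0 ↔
      ∃ J : Fin M → Fin N, Function.Injective J ∧ (∀ m, J m ∈ C m) ∧
        (S.submatrix id J).det ≠ 0 := by
  classical
  constructor
  · intro hne
    by_contra hcon
    push_neg at hcon
    apply hne
    rw [expand M N S C R hR]
    refine Finset.sum_eq_zero fun r hr => ?_
    have hrC : ∀ m, r m ∈ C m := by
      intro m; exact (Fintype.mem_piFinset.mp hr) m
    by_cases hinj : Function.Injective r
    · rw [hcon r hinj hrC]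
      simp
    · have : (S.submatrix id r).det = 0 := by
        rw [Function.not_injective_iff] at hinj
        obtain ⟨a, b, hab, hne'⟩ := hinj
        exact Matrix.det_zero_of_column_eq hne' (fun k => by simp [Matrix.submatrix, hab])
      rw [this]; simp
  · rintro ⟨J, hJinj, hJC, hJdet⟩
    intro h0
    apply hJdet
    set ev := MvPolynomial.eval (fun p : Fin N × Fin M => if p.1 = J p.2 then (1:ℝ) else 0) with hev
    have heq := congrArg ev h0
    change ev (Matrix.det (@HMul.hMul _ _ (Matrix (Fin M) (Fin M) (MvPolynomial (Fin N × Fin M) ℝ)) Matrix.instHMulOfFintypeOfMulOfAddCommMonoid (S.map MvPolynomial.C) R)) = ev 0 at heq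
    rw [RingHom.map_det, map_zero] at heq
    have hterm : ∀ (m1 m : Fin M) (j : Fin N),
        ev (MvPolynomial.C (S m1 j)) * ev (if j ∈ C m then MvPolynomial.X (j, m) else 0)
        = if j = J m then S m1 j else 0 := by
      intro m1 m j
      by_cases hj : j ∈ C m
      · simp only [hev, hj, if_true, MvPolynomial.eval_C, MvPolynomial.eval_X]
        by_cases hjJ : j = J m <;> simp [hjJ]
      · have hne : j ≠ J m := fun h => hj (h ▸ hJC m)
        simp [hj, hne]
    have hM : ev.mapMatrix (@HMul.hMul _ _ (Matrix (Fin M) (Fin M) (MvPolynomial (Fin N × Fin M) ℝ)) Matrix.instHMulOfFintypeOfMulOfAddCommMonoid (S.map MvPolynomial.C) R) = S.submatrix id J := by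
      ext m1 m
      simp only [RingHom.mapMatrix_apply, Matrix.map_apply, Matrix.mul_apply, map_sum, map_mul,
        hR, Matrix.submatrix_apply, id]
      rw [Finset.sum_congr rfl fun j _ => hterm m1 m j]
      simp
    rw [hM] at heq
    exact heq
end

section
/- Let S be M×N, R be N×M with symbolic entries r_{jm} supported on input pairs, and assume det(SR) ≠ 0 as a polynomial. For metabolites m* and m', the (m',m*) entry of (SR)⁻¹ multiplied by det(SR) equals (-1)^{m*+m'} det((SR) with row m* and column m' deleted); consequently det(SR)·(δx)^{m*}_{m'} = -Σ_{J^{∨m'}} det(S^{J^{∨m'} ∪ e_{m*}}) · Π_{m≠m'} r_{J^{∨m'}(m),m}, where the sum runs over all Partial Child Selections J^{∨m'} (injective maps from M∖{m'} to reactions assigning each metabolite an outgoing reaction), and S^{J^{∨m'} ∪ e_{m*}} is the M×M matrix whose m'-th column is the standard basis vector e_{m*} and whose other columns are the stoichiometric columns selected by J^{∨m'}. -/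
open scoped Classical

/-- The field of rational functions in the indeterminates indexed by σ. -/
noncomputable abbrev RatFunField (σ : Type) := FractionRing (MvPolynomial σ ℝ)

set_option maxHeartbeats 1000000
set_option synthInstance.maxHeartbeats 400000

/-- Cramer's rule for the metabolite response, and its Partial Child
Selection expansion: det(SR)·((SR)⁻¹)_{m',m*} = (-1)^{m*+m'}·det(minor), and
det(SR)·(δx)^{m*}_{m'} = -Σ_{J^{∨m'}} det(S^{J^{∨m'} ∪ e_{m*}})·Π_{m≠m'} r_{J^{∨m'}(m),m}. -/
theorem stmt4 (M N : ℕ) (mstar m' : Fin (M + 1))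
    (S : Matrix (Fin (M + 1)) (Fin N) ℝ)
    (C : Fin (M + 1) → Finset (Fin N))
    (ι : ℝ → RatFunField (Fin N × Fin (M + 1)))
    (hι : ∀ x, ι x = algebraMap (MvPolynomial (Fin N × Fin (M + 1)) ℝ) _ (MvPolynomial.C x))
    (r : Fin N × Fin (M + 1) → RatFunField (Fin N × Fin (M + 1)))
    (hr : ∀ p, r p = algebraMap (MvPolynomial (Fin N × Fin (M + 1)) ℝ) _ (MvPolynomial.X p))
    (R : Matrix (Fin N) (Fin (M + 1)) (RatFunField (Fin N × Fin (M + 1))))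
    (hR : ∀ j m, R j m = if j ∈ C m then r (j, m) else 0)
    (A : Matrix (Fin (M + 1)) (Fin (M + 1)) (RatFunField (Fin N × Fin (M + 1))))
    (hA : A = HMul.hMul (S.map ι) R)
    (hdet : A.det ≠ 0) :
    A.det * A⁻¹ m' mstar =
        (-1) ^ ((mstar : ℕ) + (m' : ℕ)) * (A.submatrix mstar.succAbove m'.succAbove).det
    ∧ A.det * (-(A⁻¹ m' mstar)) =
        -∑ J : {J : {m : Fin (M + 1) // m ≠ m'} → Fin N //
              Function.Injective J ∧ ∀ m, J m ∈ C m.1},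
            ι (Matrix.of (fun i m => if h : m = m' then (if i = mstar then (1 : ℝ) else 0)
                else S i (J.1 ⟨m, h⟩))).det *
              ∏ m : {m : Fin (M + 1) // m ≠ m'}, r (J.1 m, m.1) := by
  classical
  set φ : ℝ →+* RatFunField (Fin N × Fin (M + 1)) :=
    (algebraMap (MvPolynomial (Fin N × Fin (M + 1)) ℝ) (RatFunField (Fin N × Fin (M + 1)))).comp (MvPolynomial.C) with hφdef
  have hιφ : ι = ⇑φ := funext fun x => by simp [hι x, hφdef]
  -- basic reduction to adjugate
  have hadj : A.det * A⁻¹ m' mstar = A.adjugate m' mstar := by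
    rw [Matrix.inv_def, Matrix.smul_apply, Ring.inverse_eq_inv, smul_eq_mul, ← mul_assoc,
      mul_inv_cancel₀ hdet, one_mul]
  -- N is nonempty
  have hN : Nonempty (Fin N) := by
    by_contra h
    have hE : IsEmpty (Fin N) := not_nonempty_iff.mp h
    apply hdet
    have hz : A = 0 := by
      rw [hA]; ext i m; simp [Matrix.mul_apply]
    rw [hz, Matrix.det_zero]
  obtain ⟨j₀⟩ := hN
  set f := (Matrix.detRowAlternating (R := RatFunField (Fin N × Fin (M + 1)))
    (n := Fin (M + 1))).toMultilinearMap with hfdef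
  -- setup
  set B : Matrix (Fin (M + 1)) (Fin (M + 1)) (RatFunField (Fin N × Fin (M + 1))) := (Matrix.transpose A).updateRow m' (Pi.single mstar 1) with hBdef
  set g : Fin (M + 1) → Fin N → (Fin (M + 1) → RatFunField (Fin N × Fin (M + 1))) := fun m j =>
    if m = m' then Pi.single mstar 1 else fun i => ι (S i j) * r (j, m) with hgdef
  set A' : Fin (M + 1) → Finset (Fin N) := fun m => if m = m' then {j₀} else C m with hA'def
  have hB : ∀ m, B m = ∑ j ∈ A' m, g m j := by
    intro m
    by_cases h : m = m'
    · subst h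
      simp [hBdef, hA'def, hgdef]
    · funext i
      simp only [hBdef, Matrix.updateRow_ne h, Matrix.transpose_apply, hA'def, hgdef, if_neg h,
        Finset.sum_apply]
      rw [hA]
      simp only [Matrix.mul_apply, Matrix.map_apply, hR, mul_ite, mul_zero]
      rw [Finset.sum_ite_mem, Finset.univ_inter]
  -- multilinear expansion
  have hdetB : B.det = ∑ p ∈ Fintype.piFinset A', f (fun m => g m (p m)) := by
    have h1 : (B : Fin (M + 1) → Fin (M + 1) → RatFunField (Fin N × Fin (M + 1))) =
        fun m => ∑ j ∈ A' m, g m j := funext hB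
    calc B.det = f B := rfl
      _ = f (fun m => ∑ j ∈ A' m, g m j) := by rw [h1]
      _ = ∑ p ∈ Fintype.piFinset A', f (fun m => g m (p m)) := f.map_sum_finset g A'
  -- per-term evaluation
  have hterm : ∀ p : Fin (M + 1) → Fin N,
      f (fun m => g m (p m)) =
      ι ((Matrix.of (fun i m => if h : m = m' then (if i = mstar then (1 : ℝ) else 0)
            else S i (p m))).det) * ∏ m ∈ Finset.univ.erase m', r (p m, m) := by
    intro p
    set c : Fin (M + 1) → RatFunField (Fin N × Fin (M + 1)) := fun m => if m = m' then 1 else r (p m, m) with hcdef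
    set w : Fin (M + 1) → Fin (M + 1) → RatFunField (Fin N × Fin (M + 1)) := fun m =>
      if m = m' then Pi.single mstar 1 else fun i => ι (S i (p m)) with hwdef
    have hgw : (fun m => g m (p m)) = fun m => c m • w m := by
      funext m
      by_cases h : m = m'
      · simp [hgdef, hcdef, hwdef, h]
      · funext i
        simp only [hgdef, hcdef, hwdef, if_neg h, Pi.smul_apply, smul_eq_mul]
        ring
    rw [hgw]
    rw [f.map_smul_univ c w]
    have hw : f w =
        ι ((Matrix.of (fun i m => if h : m = m' then (if i = mstar then (1 : ℝ) else 0)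
            else S i (p m))).det) := by
      have hwt : (Matrix.of w) =
          (((Matrix.of (fun i m => if h : m = m' then (if i = mstar then (1 : ℝ) else 0)
            else S i (p m))).map ⇑φ)).transpose := by
        ext m i
        by_cases h : m = m'
        · simp only [hwdef, Matrix.of_apply, Matrix.transpose_apply, Matrix.map_apply, h,
            dif_pos, if_pos h, Pi.single_apply]
          by_cases hi : i = mstar <;> simp [hi, Pi.single_apply]
        · simp [hwdef, Matrix.of_apply, Matrix.transpose_apply, Matrix.map_apply, h, hιφ]
      have : f w = (Matrix.of w).det := rfl
      rw [this, hwt, Matrix.det_transpose, hιφ]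
      exact (φ.map_det _).symm
    have hc : ∏ m, c m = ∏ m ∈ Finset.univ.erase m', r (p m, m) := by
      rw [← Finset.prod_erase Finset.univ (by simp [hcdef] : c m' = 1)]
      exact Finset.prod_congr rfl fun m hm => by
        simp [hcdef, Finset.ne_of_mem_erase hm]
    rw [hw, hc, smul_eq_mul, mul_comm]
  -- reindexing
  set T : (Fin (M + 1) → Fin N) → RatFunField (Fin N × Fin (M + 1)) := fun p =>
    ι ((Matrix.of (fun i m => if h : m = m' then (if i = mstar then (1 : ℝ) else 0)
          else S i (p m))).det) * ∏ m ∈ Finset.univ.erase m', r (p m, m) with hTdef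
  have hkey : A.adjugate m' mstar =
      ∑ J : {J : {m : Fin (M + 1) // m ≠ m'} → Fin N //
            Function.Injective J ∧ ∀ m, J m ∈ C m.1},
          ι (Matrix.of (fun i m => if h : m = m' then (if i = mstar then (1 : ℝ) else 0)
              else S i (J.1 ⟨m, h⟩))).det *
            ∏ m : {m : Fin (M + 1) // m ≠ m'}, r (J.1 m, m.1) := by
    have h0 : A.adjugate m' mstar = B.det := by
      rw [← Matrix.transpose_apply (A.adjugate), Matrix.adjugate_transpose,
        Matrix.adjugate_apply]
    rw [h0, hdetB]
    have h1 : ∑ p ∈ Fintype.piFinset A',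
        f (fun m => g m (p m)) = ∑ p ∈ Fintype.piFinset A', T p :=
      Finset.sum_congr rfl fun p _ => hterm p
    rw [h1]
    -- drop non-injective terms
    set good : (Fin (M + 1) → Fin N) → Prop := fun p =>
      Function.Injective (fun m : {m : Fin (M + 1) // m ≠ m'} => p m.1) with hgood
    have h2 : ∑ p ∈ (Fintype.piFinset A').filter good, T p = ∑ p ∈ Fintype.piFinset A', T p := by
      apply Finset.sum_filter_of_ne
      intro p _ hne
      by_contra hng
      apply hne
      simp only [hgood, Function.Injective, not_forall] at hng
      obtain ⟨m₁, m₂, heq, hneq⟩ := hng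
      have hdz : (Matrix.of (fun i m => if h : m = m' then (if i = mstar then (1 : ℝ) else 0)
          else S i (p m))).det = 0 := by
        apply Matrix.det_zero_of_column_eq (Subtype.coe_ne_coe.mpr hneq)
        intro k
        simp only [Matrix.of_apply, dif_neg m₁.2, dif_neg m₂.2, heq]
      rw [hTdef]
      simp only [hdz, hιφ, map_zero, zero_mul]
    rw [← h2]
    -- bijection
    refine Finset.sum_bij'
      (i := fun p hp => (⟨fun m => p m.1, ?_, ?_⟩ :
        {J : {m : Fin (M + 1) // m ≠ m'} → Fin N //
            Function.Injective J ∧ ∀ m, J m ∈ C m.1}))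
      (j := fun J _ => fun m => if h : m = m' then j₀ else J.1 ⟨m, h⟩)
      (fun p hp => Finset.mem_univ _) ?_ ?_ ?_ ?_
    · exact (Finset.mem_filter.mp hp).2
    · intro m
      have := Fintype.mem_piFinset.mp (Finset.mem_filter.mp hp).1 m.1
      simpa [hA'def, m.2] using this
    · intro J _
      rw [Finset.mem_filter]
      constructor
      · rw [Fintype.mem_piFinset]
        intro m
        by_cases h : m = m'
        · simp [hA'def, h]
        · simp only [hA'def, if_neg h, dif_neg h]
          exact J.2.2 ⟨m, h⟩
      · intro m₁ m₂ heq
        simp only [dif_neg m₁.2, dif_neg m₂.2] at heq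
        exact J.2.1 heq
    · intro p hp
      funext m
      show (if h : m = m' then j₀ else p m) = p m
      by_cases h : m = m'
      · subst h
        have := Fintype.mem_piFinset.mp (Finset.mem_filter.mp hp).1 m
        simp only [hA'def, if_pos rfl, Finset.mem_singleton] at this
        simp [this]
      · simp [dif_neg h]
    · intro J _
      apply Subtype.ext
      funext m
      show (if h : (m : Fin (M + 1)) = m' then j₀ else J.1 ⟨m.1, h⟩) = J.1 m
      simp [dif_neg m.2]
    · intro p hp
      simp only [hTdef]
      refine congrArg₂ (· * ·) rfl ?_
      exact Finset.prod_subtype (Finset.univ.erase m')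
        (fun m => by simp [Finset.mem_erase]) (fun m => r (p m, m))
  refine ⟨?_, ?_⟩
  · rw [hadj, Matrix.adjugate_fin_succ_eq_det_submatrix]
  · rw [mul_neg, hadj, hkey]
end

section
/- In the setting above, the response (δx)^{m*}_{m'} of metabolite m' to a perturbation of m* is algebraically nonzero (i.e., a nonzero rational function of the indeterminates r_{jm}) if and only if there exists a Partial Child Selection J^{∨m'} : M∖{m'} → E with det(S^{J^{∨m'} ∪ e_{m*}}) ≠ 0. -/
open scoped Classical
open Matrix

lemma prodX {σ β : Type} (s : Finset β) (f : β → σ) :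
    (∏ b ∈ s, (MvPolynomial.X (f b) : MvPolynomial σ ℝ)) =
    MvPolynomial.monomial (∑ b ∈ s, Finsupp.single (f b) 1) 1 := by
  classical
  induction s using Finset.induction_on with
  | empty => simp
  | @insert a s h ih =>
      rw [Finset.prod_insert h, ih, Finset.sum_insert h]
      show MvPolynomial.monomial (Finsupp.single (f a) 1) 1 * _ = _
      rw [MvPolynomial.monomial_mul, one_mul]


/-- The response (δx)^{m*}_{m'} = -((SR)⁻¹)_{m',m*} is algebraically
nonzero iff there exists a Partial Child Selection J^{∨m'} with
det(S^{J^{∨m'} ∪ e_{m*}}) ≠ 0. -/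
theorem stmt5 (M N : ℕ) (mstar m' : Fin M)
    (S : Matrix (Fin M) (Fin N) ℝ)
    (C : Fin M → Finset (Fin N))
    (ι : ℝ → RatFunField (Fin N × Fin M))
    (hι : ∀ x, ι x = algebraMap (MvPolynomial (Fin N × Fin M) ℝ) _ (MvPolynomial.C x))
    (r : Fin N × Fin M → RatFunField (Fin N × Fin M))
    (hr : ∀ p, r p = algebraMap (MvPolynomial (Fin N × Fin M) ℝ) _ (MvPolynomial.X p))
    (R : Matrix (Fin N) (Fin M) (RatFunField (Fin N × Fin M)))
    (hR : ∀ j m, R j m = if j ∈ C m then r (j, m) else 0)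
    (A : Matrix (Fin M) (Fin M) (RatFunField (Fin N × Fin M)))
    (hA : A = S.map ι * R)
    (hdet : A.det ≠ 0) :
    -(A⁻¹ m' mstar) ≠ 0 ↔
      ∃ J : {m : Fin M // m ≠ m'} → Fin N,
        Function.Injective J ∧ (∀ m, J m ∈ C m.1) ∧
        (Matrix.of (fun i m => if h : m = m' then (if i = mstar then (1 : ℝ) else 0)
            else S i (J ⟨m, h⟩))).det ≠ 0 := by
  classical
  set φ : MvPolynomial (Fin N × Fin M) ℝ →+* RatFunField (Fin N × Fin M) :=
    (algebraMap (MvPolynomial (Fin N × Fin M) ℝ) (RatFunField (Fin N × Fin M)) : _ →+* _) with hφ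
  -- N ≥ 1
  rcases Nat.eq_zero_or_pos N with hN | hN
  · exfalso
    apply hdet
    have hA0 : A = 0 := by
      subst hN
      rw [hA]
      ext i m
      rw [Matrix.mul_apply]
      simp
    rw [hA0]
    haveI : Nonempty (Fin M) := ⟨m'⟩
    exact Matrix.det_zero
  set j0 : Fin N := ⟨0, hN⟩ with hj0
  set A' : Fin M → Finset (Fin N) := fun m => if m = m' then {j0} else C m with hA'
  set d : (Fin M → Fin N) → ℝ := fun ρ =>
    (Matrix.of fun m i => if m = m' then (if i = mstar then (1:ℝ) else 0) else S i (ρ m)).det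
    with hd
  set g : Fin M → Fin N → Fin M → MvPolynomial (Fin N × Fin M) ℝ := fun m j i =>
    if m = m' then (if i = mstar then 1 else 0) else MvPolynomial.X (j,m) * MvPolynomial.C (S i j)
    with hg
  set Q : Matrix (Fin M) (Fin M) (MvPolynomial (Fin N × Fin M) ℝ) :=
    Matrix.of fun m i => ∑ j ∈ A' m, g m j i with hQ
  set e : (Fin M → Fin N) → ((Fin N × Fin M) →₀ ℕ) := fun ρ =>
    ∑ m ∈ Finset.univ.erase m', Finsupp.single (ρ m, m) 1 with he
  -- Step 1: reduce inverse entry to det of updateColumn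
  have step1 : (-(A⁻¹ m' mstar) ≠ 0) ↔
      (A.updateCol m' (Pi.single mstar 1)).det ≠ 0 := by
    rw [neg_ne_zero, Matrix.inv_def, Matrix.smul_apply, smul_eq_mul, mul_ne_zero_iff]
    have h1 : Ring.inverse A.det ≠ 0 := by
      rw [Ring.inverse_eq_inv]
      exact inv_ne_zero hdet
    have h2 : A.adjugate m' mstar = (A.updateCol m' (Pi.single mstar 1)).det := by
      calc A.adjugate m' mstar = A.adjugate.transpose mstar m' := rfl
        _ = A.transpose.adjugate mstar m' := by rw [Matrix.adjugate_transpose]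
        _ = (A.transpose.updateRow m' (Pi.single mstar 1)).det := Matrix.adjugate_apply _ _ _
        _ = _ := by rw [Matrix.updateRow_transpose, Matrix.det_transpose]
    rw [h2]
    exact and_iff_right h1
  -- Step 2: updateColumn matrix is image of Q
  have step2 : (A.updateCol m' (Pi.single mstar 1)).det = φ Q.det := by
    have hT : (A.updateCol m' (Pi.single mstar 1))ᵀ = Q.map φ := by
      ext m i
      rw [Matrix.transpose_apply, Matrix.map_apply, Matrix.updateCol_apply, hQ]
      by_cases hm : m = m'
      · subst hm
        rw [if_pos rfl]
        simp [hA', hg, Finset.sum_singleton, apply_ite φ, Pi.single_apply]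
      · rw [if_neg hm]
        have hAm : A i m = ∑ j ∈ C m, ι (S i j) * r (j, m) := by
          rw [hA, Matrix.mul_apply]
          calc ∑ j, (S.map ι) i j * R j m
              = ∑ j : Fin N, (if j ∈ C m then ι (S i j) * r (j, m) else 0) := by
                refine Finset.sum_congr rfl fun j _ => ?_
                rw [Matrix.map_apply, hR]
                split_ifs <;> simp
            _ = ∑ j ∈ Finset.univ ∩ C m, ι (S i j) * r (j, m) := Finset.sum_ite_mem _ _ _
            _ = _ := by rw [Finset.univ_inter]
        rw [hAm, Matrix.of_apply, map_sum]
        rw [show A' m = C m by rw [hA']; exact if_neg hm]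
        refine Finset.sum_congr rfl fun j hj => ?_
        rw [hg]
        simp only [if_neg hm]
        rw [_root_.map_mul φ, hι, hr, mul_comm]
    rw [← Matrix.det_transpose (A.updateCol m' (Pi.single mstar 1)), hT,
      RingHom.map_det, RingHom.mapMatrix_apply]
  -- Step 3: expand Q.det by multilinearity
  have hterm : ∀ ρ : Fin M → Fin N,
      (Matrix.of fun m i => g m (ρ m) i).det = MvPolynomial.monomial (e ρ) (d ρ) := by
    intro ρ
    set v : Fin M → MvPolynomial (Fin N × Fin M) ℝ :=
      fun m => if m = m' then 1 else MvPolynomial.X (ρ m, m) with hv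
    set W : Matrix (Fin M) (Fin M) (MvPolynomial (Fin N × Fin M) ℝ) :=
      Matrix.of (fun m i => if m = m' then (if i = mstar then 1 else 0)
        else MvPolynomial.C (S i (ρ m))) with hW
    have h1 : (Matrix.of fun m i => g m (ρ m) i) = Matrix.of fun m i => v m * W m i := by
      ext m i
      by_cases hm : m = m' <;> simp [hg, hv, hW, hm]
    have h2 : (∏ m, v m) = MvPolynomial.monomial (e ρ) 1 := by
      have hv1 : v m' = 1 := if_pos rfl
      have hv2 : ∀ m ∈ Finset.univ.erase m', v m = MvPolynomial.X (ρ m, m) :=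
        fun m hm => if_neg (Finset.ne_of_mem_erase hm)
      rw [he, ← prodX, ← Finset.mul_prod_erase Finset.univ v (Finset.mem_univ m'), hv1, one_mul]
      exact Finset.prod_congr rfl hv2
    have h3 : W.det = MvPolynomial.C (d ρ) := by
      rw [hd, RingHom.map_det, RingHom.mapMatrix_apply]
      congr 1
      ext m i
      by_cases hm : m = m' <;> simp [hW, hm, apply_ite (MvPolynomial.C (R := ℝ))]
    rw [h1, Matrix.det_mul_column, h2, h3, mul_comm, MvPolynomial.C_mul_monomial, mul_one]
  have step3 : Q.det = ∑ ρ ∈ Fintype.piFinset A', MvPolynomial.monomial (e ρ) (d ρ) := by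
    have hrows : (Q : Fin M → Fin M → MvPolynomial (Fin N × Fin M) ℝ)
        = fun m => ∑ j ∈ A' m, (fun i => g m j i) := by
      funext m i
      rw [Finset.sum_apply]
      rfl
    calc Q.det = Matrix.detRowAlternating.toMultilinearMap
          (fun m => ∑ j ∈ A' m, (fun i => g m j i)) := by
            show Matrix.detRowAlternating Q = _
            rw [hrows]
            rfl
      _ = ∑ ρ ∈ Fintype.piFinset A',
            Matrix.detRowAlternating.toMultilinearMap (fun m => fun i => g m (ρ m) i) :=
          MultilinearMap.map_sum_finset _ _ _
      _ = ∑ ρ ∈ Fintype.piFinset A', MvPolynomial.monomial (e ρ) (d ρ) :=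
          Finset.sum_congr rfl fun ρ _ => hterm ρ
  -- Step 4: injectivity of monomial exponents
  have key : ∀ (ρ : Fin M → Fin N) (j : Fin N) (m : Fin M), m ≠ m' →
      e ρ (j, m) = if ρ m = j then 1 else 0 := by
    intro ρ j m hm
    rw [he]
    rw [Finsupp.finset_sum_apply]
    rw [Finset.sum_eq_single_of_mem m (Finset.mem_erase.mpr ⟨hm, Finset.mem_univ m⟩)]
    · rw [Finsupp.single_apply]
      simp [Prod.ext_iff]
    · intro b _ hbm
      rw [Finsupp.single_apply, if_neg]
      intro hc
      exact hbm (congrArg Prod.snd hc)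
  have einj : ∀ ρ ∈ Fintype.piFinset A', ∀ ρ' ∈ Fintype.piFinset A', e ρ = e ρ' → ρ = ρ' := by
    intro ρ hρ ρ' hρ' hee
    funext m
    by_cases hm : m = m'
    · subst hm
      have h1 := Fintype.mem_piFinset.mp hρ m
      have h2 := Fintype.mem_piFinset.mp hρ' m
      simp only [hA', if_pos rfl, Finset.mem_singleton] at h1 h2
      rw [h1, h2]
    · have h1 : e ρ (ρ m, m) = 1 := by rw [key ρ (ρ m) m hm, if_pos rfl]
      have h2 := key ρ' (ρ m) m hm
      rw [hee, h2] at h1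
      by_cases h : ρ' m = ρ m
      · exact h.symm
      · rw [if_neg h] at h1
        exact absurd h1 zero_ne_one
  -- Step 5: nonvanishing
  have step5 : Q.det ≠ 0 ↔ ∃ ρ ∈ Fintype.piFinset A', d ρ ≠ 0 := by
    constructor
    · intro hne
      by_contra hall
      push_neg at hall
      apply hne
      rw [step3]
      refine Finset.sum_eq_zero fun ρ hρ => ?_
      rw [hall ρ hρ]
      exact map_zero _
    · rintro ⟨ρ, hρ, hdρ⟩ h0
      have hco : MvPolynomial.coeff (e ρ) Q.det = d ρ := by
        rw [step3, MvPolynomial.coeff_sum]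
        rw [Finset.sum_eq_single_of_mem ρ hρ]
        · rw [MvPolynomial.coeff_monomial, if_pos rfl]
        · intro ρ' hρ' hne
          rw [MvPolynomial.coeff_monomial, if_neg]
          intro hc
          exact hne (einj ρ' hρ' ρ hρ hc)
      rw [h0, MvPolynomial.coeff_zero] at hco
      exact hdρ hco.symm
  -- Step 6: bridge
  have step6 : (∃ ρ ∈ Fintype.piFinset A', d ρ ≠ 0) ↔
      ∃ J : {m : Fin M // m ≠ m'} → Fin N,
        Function.Injective J ∧ (∀ m, J m ∈ C m.1) ∧
        (Matrix.of (fun i m => if h : m = m' then (if i = mstar then (1 : ℝ) else 0)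
            else S i (J ⟨m, h⟩))).det ≠ 0 := by
    constructor
    · rintro ⟨ρ, hρ, hdρ⟩
      have hmem := Fintype.mem_piFinset.mp hρ
      refine ⟨fun m => ρ m.1, ?_, ?_, ?_⟩
      · intro a b hab
        by_contra hne
        apply hdρ
        rw [hd]
        refine Matrix.det_zero_of_row_eq (M := Matrix.of fun m i =>
          if m = m' then (if i = mstar then (1:ℝ) else 0) else S i (ρ m))
          (i := a.1) (j := b.1) (fun h => hne (Subtype.ext h)) ?_
        funext i
        show (if a.1 = m' then (if i = mstar then (1:ℝ) else 0) else S i (ρ a.1))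
          = (if b.1 = m' then (if i = mstar then (1:ℝ) else 0) else S i (ρ b.1))
        rw [if_neg a.2, if_neg b.2]
        exact congrArg (S i) hab
      · intro m
        have := hmem m.1
        simp only [hA', if_neg m.2] at this
        exact this
      · have hTr : (Matrix.of (fun i m => if h : m = m' then (if i = mstar then (1 : ℝ) else 0)
            else S i ((fun m => ρ m.1) (⟨m, h⟩ : {m : Fin M // m ≠ m'}))))
            = (Matrix.of fun m i => if m = m' then (if i = mstar then (1:ℝ) else 0)
              else S i (ρ m))ᵀ := by
          ext i m
          by_cases h : m = m' <;> simp [h]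
        rw [hTr, Matrix.det_transpose]
        rw [hd] at hdρ
        exact hdρ
    · rintro ⟨J, hJinj, hJC, hJdet⟩
      refine ⟨fun m => if h : m = m' then j0 else J ⟨m, h⟩, ?_, ?_⟩
      · rw [Fintype.mem_piFinset]
        intro m
        by_cases h : m = m'
        · subst h
          simp [hA']
        · simp only [hA', if_neg h, dif_neg h]
          exact hJC ⟨m, h⟩
      · intro h0
        apply hJdet
        have hTr : (Matrix.of (fun i m => if h : m = m' then (if i = mstar then (1 : ℝ) else 0)
            else S i (J ⟨m, h⟩)))
            = (Matrix.of fun m i => if m = m' then (if i = mstar then (1:ℝ) else 0)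
              else S i (if h : m = m' then j0 else J ⟨m, h⟩))ᵀ := by
          ext i m
          by_cases h : m = m' <;> simp [h]
        rw [hTr, Matrix.det_transpose]
        rw [hd] at h0
        exact h0
  rw [step1, step2, ← step6, ← step5]
  exact map_ne_zero_iff φ (IsFractionRing.injective _ _)
end

section
/- Let S, R be as above with det(SR) ≠ 0 algebraically, and let Φ^{m*} = -R (SR)^{-1} e_{m*} be the flux response vector. Then det(SR)·Φ^{m*}_{j'} = -Σ_{J ∋ j'} det(S^{J∖j' ∪ e_{m*}}) · Π_{m} r_{J(m),m}, where the sum runs over Child Selections J whose image contains j', and S^{J∖j' ∪ e_{m*}} is S^J with the column S^{j'} replaced by the standard basis vector e_{m*}. -/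
open scoped Classical

open Matrix

lemma det_updateRow_single_eq_updateCol {M : ℕ} (M0 : Matrix (Fin M) (Fin M) ℝ)
    (rr c : Fin M) :
    (M0.updateRow rr (Pi.single c 1)).det = (M0.updateCol c (Pi.single rr 1)).det := by
  rw [← Matrix.adjugate_apply, ← Matrix.det_transpose (M0.updateCol c _),
    ← Matrix.updateRow_transpose, ← Matrix.adjugate_apply, ← Matrix.adjugate_transpose,
    Matrix.transpose_apply]

lemma det_map_mul_expand {M N : ℕ} (C : Fin M → Finset (Fin N))
    {K : Type*} [Field K] (φ : ℝ →+* K)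
    (r : Fin N × Fin M → K)
    (R : Matrix (Fin N) (Fin M) K)
    (hR : ∀ j m, R j m = if j ∈ C m then r (j, m) else 0)
    (T : Matrix (Fin M) (Fin N) ℝ) :
    (T.map (fun x => φ x) * R).det =
      ∑ J ∈ Fintype.piFinset C,
        (∏ m : Fin M, r (J m, m)) * φ ((Matrix.of fun i m => T i (J m)).det) := by
  have hrows : ((T.map (fun x => φ x) * R)ᵀ : Matrix (Fin M) (Fin M) K) =
      fun m => ∑ j ∈ C m, r (j, m) • (fun i => φ (T i j)) := by
    funext m i
    simp only [Matrix.transpose_apply, Matrix.mul_apply, Matrix.map_apply, hR,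
      mul_ite, mul_zero, Finset.sum_ite_mem, Finset.univ_inter, Finset.sum_apply,
      Pi.smul_apply, smul_eq_mul]
    exact Finset.sum_congr rfl fun j _ => mul_comm _ _
  have h1 : (T.map (fun x => φ x) * R).det
      = Matrix.detRowAlternating ((T.map (fun x => φ x) * R)ᵀ) :=
    (Matrix.det_transpose _).symm
  have hexp := (Matrix.detRowAlternating (R := K) (n := Fin M)).toMultilinearMap.map_sum_finset
      (fun m j => r (j, m) • (fun i => φ (T i j))) C
  simp only [AlternatingMap.coe_multilinearMap] at hexp
  rw [h1, hrows, hexp]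
  refine Finset.sum_congr rfl fun J _ => ?_
  have hsmul := (Matrix.detRowAlternating (R := K) (n := Fin M)).toMultilinearMap.map_smul_univ
      (fun m => r (J m, m)) (fun m => (fun i => φ (T i (J m))))
  simp only [AlternatingMap.coe_multilinearMap] at hsmul
  rw [hsmul]
  have h2 : Matrix.detRowAlternating (R := K) (n := Fin M)
        (fun m => (fun i => φ (T i (J m))))
      = φ ((Matrix.of fun i m => T i (J m)).det) := by
    have h3 : (fun m => (fun i => φ (T i (J m))))
        = (((Matrix.of fun i m => T i (J m)).map (fun x => φ x))ᵀ :
            Matrix (Fin M) (Fin M) K) := by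
      funext m i; rfl
    show Matrix.det _ = _
    rw [h3, Matrix.det_transpose]
    exact (RingHom.map_det φ _).symm
  rw [h2, smul_eq_mul]

/-- Child Selection expansion of the flux response to a metabolite
perturbation: det(SR)·Φ^{m*}_{j'} = -Σ_{J ∋ j'} det(S^{J∖j' ∪ e_{m*}})·Π_m r_{J(m),m}. -/
theorem stmt6 (M N : ℕ) (mstar : Fin M) (j' : Fin N)
    (S : Matrix (Fin M) (Fin N) ℝ)
    (C : Fin M → Finset (Fin N))
    (ι : ℝ → RatFunField (Fin N × Fin M))
    (hι : ∀ x, ι x = algebraMap (MvPolynomial (Fin N × Fin M) ℝ) _ (MvPolynomial.C x))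
    (r : Fin N × Fin M → RatFunField (Fin N × Fin M))
    (hr : ∀ p, r p = algebraMap (MvPolynomial (Fin N × Fin M) ℝ) _ (MvPolynomial.X p))
    (R : Matrix (Fin N) (Fin M) (RatFunField (Fin N × Fin M)))
    (hR : ∀ j m, R j m = if j ∈ C m then r (j, m) else 0)
    (A : Matrix (Fin M) (Fin M) (RatFunField (Fin N × Fin M)))
    (hA : A = S.map ι * R)
    (hdet : A.det ≠ 0)
    (Φ : Fin N → RatFunField (Fin N × Fin M))
    (hΦ : ∀ j, Φ j = -((R * A⁻¹) j mstar)) :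
    A.det * Φ j' =
      -∑ J : {J : Fin M → Fin N //
            Function.Injective J ∧ (∀ m, J m ∈ C m) ∧ j' ∈ Set.range J},
          ι (Matrix.of (fun i m => if J.1 m = j' then (if i = mstar then (1 : ℝ) else 0)
              else S i (J.1 m))).det *
            ∏ m : Fin M, r (J.1 m, m) := by
  set φ : ℝ →+* RatFunField (Fin N × Fin M) :=
    (algebraMap (MvPolynomial (Fin N × Fin M) ℝ) _).comp (MvPolynomial.C) with hφdef
  have hφ : ι = fun x => φ x := funext fun x => hι x
  set S' : Matrix (Fin M) (Fin N) ℝ :=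
    S.updateRow mstar (fun j => if j = j' then (1:ℝ) else 0) with hS'
  -- Step A: LHS = -(det of A with row mstar replaced by R j' ·)
  have stepA : A.det * Φ j' = -((A.updateRow mstar (fun k => R j' k)).det) := by
    rw [hΦ, mul_neg, neg_inj, Matrix.mul_apply, Finset.mul_sum]
    have hsum : ∀ k, A.det * (R j' k * A⁻¹ k mstar) = R j' k * A.adjugate k mstar := by
      intro k
      rw [Matrix.inv_def, Matrix.smul_apply, Ring.inverse_eq_inv, smul_eq_mul]
      field_simp
    rw [Finset.sum_congr rfl fun k _ => hsum k]
    have hc := congrFun (Matrix.cramer_eq_adjugate_mulVec Aᵀ (fun k => R j' k)) mstar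
    rw [Matrix.cramer_apply, Matrix.updateCol_transpose, Matrix.det_transpose] at hc
    rw [hc, Matrix.mulVec, dotProduct]
    refine Finset.sum_congr rfl fun k _ => ?_
    rw [← Matrix.adjugate_transpose, Matrix.transpose_apply, mul_comm]
  -- Step B: that matrix equals S'.map φ * R
  have stepB : A.updateRow mstar (fun k => R j' k) = S'.map (fun x => φ x) * R := by
    ext i m
    rcases eq_or_ne i mstar with h | h
    · subst h
      rw [Matrix.updateRow_self, Matrix.mul_apply]
      simp only [Matrix.map_apply, hS', Matrix.updateRow_self]
      rw [Finset.sum_congr rfl (fun j _ => by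
        rw [show φ (if j = j' then (1:ℝ) else 0) = if j = j' then (1:RatFunField (Fin N × Fin M)) else 0 by
          split <;> simp])]
      simp [ite_mul]
    · rw [Matrix.updateRow_ne h, hA, Matrix.mul_apply, Matrix.mul_apply]
      refine Finset.sum_congr rfl fun j _ => ?_
      simp [Matrix.map_apply, hS', Matrix.updateRow_ne h, hφ]
  -- Step C: expand
  rw [stepA, stepB, det_map_mul_expand C φ r R hR S']
  -- Step D: prune the sum
  set p : (Fin M → Fin N) → Prop :=
    fun J => Function.Injective J ∧ (∀ m, J m ∈ C m) ∧ j' ∈ Set.range J with hp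
  have hprune : ∑ J ∈ Fintype.piFinset C,
        (∏ m : Fin M, r (J m, m)) * φ ((Matrix.of fun i m => S' i (J m)).det)
      = ∑ J ∈ Finset.univ.filter p,
        (∏ m : Fin M, r (J m, m)) * φ ((Matrix.of fun i m => S' i (J m)).det) := by
    rw [← Finset.sum_filter_of_ne (p := fun J => Function.Injective J ∧ j' ∈ Set.range J)
      (fun J hJ hne => ?_)]
    · apply Finset.sum_congr _ fun _ _ => rfl
      ext J
      simp only [Finset.mem_filter, Fintype.mem_piFinset, Finset.mem_univ, true_and, hp]
      tauto
    · by_contra hcon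
      apply hne
      have : ((Matrix.of fun i m => S' i (J m)).det) = 0 := by
        rcases Classical.em (Function.Injective J) with hinj | hninj
        · have hrange : j' ∉ Set.range J := fun hr' => hcon ⟨hinj, hr'⟩
          apply Matrix.det_eq_zero_of_row_eq_zero mstar
          intro m
          have : J m ≠ j' := fun h => hrange ⟨m, h⟩
          simp [hS', Matrix.updateRow_self, this]
        · rw [Function.not_injective_iff] at hninj
          obtain ⟨m1, m2, hJeq, hne'⟩ := hninj
          exact Matrix.det_zero_of_column_eq hne' (fun i => by simp [hJeq])
      rw [this, map_zero, mul_zero]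
  have hsub : ∑ J ∈ Finset.univ.filter p,
        (∏ m : Fin M, r (J m, m)) * φ ((Matrix.of fun i m => S' i (J m)).det)
      = ∑ J : {J : Fin M → Fin N //
            Function.Injective J ∧ (∀ m, J m ∈ C m) ∧ j' ∈ Set.range J},
        (∏ m : Fin M, r (J.1 m, m)) * φ ((Matrix.of fun i m => S' i (J.1 m)).det) :=
    Finset.sum_subtype _ (fun J => by simp [hp]) _
  rw [hprune, hsub, neg_inj]
  refine Finset.sum_congr rfl fun ⟨J, hJinj, hJC, hJrange⟩ _ => ?_
  obtain ⟨m0, hm0⟩ := hJrange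
  have e1 : (Matrix.of fun i m => S' i (J m))
      = (Matrix.of fun i m => S i (J m)).updateRow mstar (Pi.single m0 1) := by
    ext i m
    rcases eq_or_ne i mstar with rfl | h
    · rw [Matrix.of_apply, Matrix.updateRow_self]
      simp only [hS', Matrix.updateRow_self, Pi.single_apply]
      by_cases hmm : m = m0
      · subst hmm; simp [hm0]
      · have hne2 : J m ≠ j' := fun hc => hmm (hJinj (hc.trans hm0.symm))
        simp [hmm, hne2]
    · rw [Matrix.of_apply, Matrix.updateRow_ne h, Matrix.of_apply]
      simp [hS', Matrix.updateRow_ne h]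
  have e2 : (Matrix.of fun i m => if J m = j' then (if i = mstar then (1:ℝ) else 0)
        else S i (J m))
      = (Matrix.of fun i m => S i (J m)).updateCol m0 (Pi.single mstar 1) := by
    ext i m
    rw [Matrix.of_apply, Matrix.updateCol_apply, Matrix.of_apply, Pi.single_apply]
    by_cases hmm : m = m0
    · subst hmm; simp [hm0]
    · have hne2 : J m ≠ j' := fun hc => hmm (hJinj (hc.trans hm0.symm))
      simp [hmm, hne2]
  rw [e1, det_updateRow_single_eq_updateCol, ← e2, hφ, mul_comm]
end

section
/- In the setting above, Φ^{m*}_{j'} is algebraically nonzero if and only if there exists a Child Selection J with j' ∈ J(M) and det(S^{J∖j' ∪ e_{m*}}) ≠ 0. -/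
open scoped Classical

open MvPolynomial Finset in
theorem stmt7aux0 (M N : ℕ) (j' : Fin N) :
    Function.Injective (fun J : Fin M → Fin N => ∑ m : Fin M, Finsupp.single (J m, m) (1:ℕ)) := by
  have eval : ∀ (J : Fin M → Fin N) (j : Fin N) (m : Fin M),
      (∑ k : Fin M, Finsupp.single ((J k, k)) (1:ℕ)) (j, m) = if J m = j then 1 else 0 := by
    intro J j m
    rw [Finsupp.finset_sum_apply]
    rw [Finset.sum_eq_single m]
    · rw [Finsupp.single_apply]
      simp [Prod.ext_iff]
    · intro k _ hk
      rw [Finsupp.single_apply, if_neg]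
      simp [Prod.ext_iff, hk]
    · simp
  intro J₁ J₂ h
  funext m
  have h1 := congrFun (congrArg (fun f => (f : Fin N × Fin M →₀ ℕ).toFun) h) (J₁ m, m)
  simp only at h1
  have e1 := eval J₁ (J₁ m) m
  have e2 := eval J₂ (J₁ m) m
  have : (if J₁ m = J₁ m then (1:ℕ) else 0) = if J₂ m = J₁ m then 1 else 0 := by
    rw [← e1, ← e2]; exact h1
  rw [if_pos rfl] at this
  by_cases h2 : J₂ m = J₁ m
  · exact h2.symm
  · rw [if_neg h2] at this; exact absurd this.symm (by simp)

open Finset in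
theorem stmt7aux2 (M N : ℕ) (mstar : Fin M) (j' : Fin N) (S : Matrix (Fin M) (Fin N) ℝ)
    (MatR : (Fin M → Fin N) → Fin M → Matrix (Fin M) (Fin M) ℝ)
    (hMatR : MatR = fun J m => Matrix.of fun m'' i =>
      if m'' = m then (if i = mstar then (1:ℝ) else 0) else S i (J m''))
    (cJ : (Fin M → Fin N) → ℝ)
    (hcJ : cJ = fun J => ∑ m ∈ univ.filter (fun m => J m = j'), (MatR J m).det) :
    (∀ J : Fin M → Fin N, Function.Injective J → j' ∈ Set.range J →
      cJ J = (Matrix.of (fun i m => if J m = j' then (if i = mstar then (1 : ℝ) else 0)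
            else S i (J m))).det) ∧
    (∀ J : Fin M → Fin N, cJ J ≠ 0 →
      Function.Injective J ∧ j' ∈ Set.range J ∧
      (Matrix.of (fun i m => if J m = j' then (if i = mstar then (1 : ℝ) else 0)
            else S i (J m))).det ≠ 0) := by
  -- the filter set is {m₀} when J is injective and J m₀ = j'
  have hfilter : ∀ (J : Fin M → Fin N) (m₀ : Fin M), Function.Injective J → J m₀ = j' →
      univ.filter (fun m => J m = j') = {m₀} := by
    intro J m₀ hinj hm₀
    ext m
    simp only [mem_filter, mem_univ, true_and, mem_singleton]
    constructor
    · intro h; exact hinj (h.trans hm₀.symm)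
    · intro h; rw [h, hm₀]
  -- identification of MatR with the transpose of the statement matrix
  have hDet : ∀ (J : Fin M → Fin N) (m₀ : Fin M), Function.Injective J → J m₀ = j' →
      (MatR J m₀).det = (Matrix.of (fun i m => if J m = j' then (if i = mstar then (1 : ℝ) else 0)
            else S i (J m))).det := by
    intro J m₀ hinj hm₀
    rw [← Matrix.det_transpose (Matrix.of (fun i m => if J m = j' then (if i = mstar then (1 : ℝ) else 0)
            else S i (J m)))]
    congr 1
    ext m i
    rw [hMatR]
    simp only [Matrix.transpose_apply, Matrix.of_apply]
    by_cases h : m = m₀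
    · subst h; rw [if_pos rfl, if_pos hm₀]
    · rw [if_neg h, if_neg (fun hj => h (hinj (hj.trans hm₀.symm)))]
  have key1 : ∀ J : Fin M → Fin N, Function.Injective J → j' ∈ Set.range J →
      cJ J = (Matrix.of (fun i m => if J m = j' then (if i = mstar then (1 : ℝ) else 0)
            else S i (J m))).det := by
    rintro J hinj ⟨m₀, hm₀⟩
    rw [hcJ]
    simp only
    rw [hfilter J m₀ hinj hm₀, Finset.sum_singleton, hDet J m₀ hinj hm₀]
  refine ⟨key1, ?_⟩
  intro J hne
  -- nonempty filter
  have hrange : j' ∈ Set.range J := by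
    by_contra h
    apply hne
    rw [hcJ]
    simp only
    rw [Finset.filter_false_of_mem, Finset.sum_empty]
    intro m _ hm
    exact h ⟨m, hm⟩
  have hinj : Function.Injective J := by
    by_contra h
    apply hne
    rw [Function.not_injective_iff] at h
    obtain ⟨k₁, k₂, hval, hk⟩ := h
    rw [hcJ]; simp only
    by_cases hv : J k₁ = j'
    · -- the value j' is attained twice : the two surviving determinants cancel
      have hsub : ({k₁, k₂} : Finset (Fin M)) ⊆ univ.filter (fun m => J m = j') := by
        intro x hx
        simp only [mem_insert, mem_singleton] at hx
        rcases hx with h | h <;> subst h <;>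
          simp [hv, ← hval, hv]
      have hz : ∀ m ∈ univ.filter (fun m => J m = j'), m ∉ ({k₁, k₂} : Finset (Fin M)) →
          (MatR J m).det = 0 := by
        intro m hm hnm
        simp only [mem_insert, mem_singleton, not_or] at hnm
        apply Matrix.det_zero_of_row_eq hk
        rw [hMatR]
        funext i
        simp only [Matrix.of_apply]
        rw [if_neg (Ne.symm hnm.1), if_neg (Ne.symm hnm.2), hval]
      rw [← Finset.sum_subset hsub (fun x hx hnx => hz x hx hnx)]
      rw [Finset.sum_pair hk]
      have hswap : MatR J k₂ = (MatR J k₁).submatrix (Equiv.swap k₁ k₂) id := by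
        rw [hMatR]
        ext m'' i
        simp only [Matrix.submatrix_apply, id_eq, Matrix.of_apply]
        rcases eq_or_ne m'' k₁ with rfl | h
        · rw [Equiv.swap_apply_left, if_neg hk, if_neg (Ne.symm hk), hval]
        · rcases eq_or_ne m'' k₂ with rfl | h2
          · rw [Equiv.swap_apply_right, if_pos rfl, if_pos rfl]
          · rw [Equiv.swap_apply_of_ne_of_ne h h2, if_neg h2, if_neg h]
      rw [hswap, Matrix.det_permute]
      simp [Equiv.Perm.sign_swap hk]
    · -- the doubled value is not j' : every surviving determinant has two equal rows
      rw [Finset.sum_eq_zero]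
      intro m hm
      simp only [mem_filter] at hm
      apply Matrix.det_zero_of_row_eq hk
      rw [hMatR]
      funext i
      simp only [Matrix.of_apply]
      rw [if_neg (fun h : k₁ = m => hv (by rw [h]; exact hm.2)),
        if_neg (fun h : k₂ = m => hv (by rw [hval, h]; exact hm.2)), hval]
  refine ⟨hinj, hrange, ?_⟩
  rw [← key1 J hinj hrange]
  exact hne

open Matrix MvPolynomial Finset in
theorem stmt7aux1 (M N : ℕ) (mstar : Fin M) (j' : Fin N)
    (S : Matrix (Fin M) (Fin N) ℝ) (C : Fin M → Finset (Fin N)) :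
    ((Matrix.of fun (j : Fin N) (m : Fin M) =>
        if j ∈ C m then (X (j, m) : MvPolynomial (Fin N × Fin M) ℝ) else 0) *
      (S.map MvPolynomial.C *
        Matrix.of fun (j : Fin N) (m : Fin M) =>
          if j ∈ C m then (X (j, m) : MvPolynomial (Fin N × Fin M) ℝ) else 0).adjugate)
        j' mstar
    = ∑ J : Fin M → Fin N, if (∀ m, J m ∈ C m) then
        monomial (∑ m : Fin M, Finsupp.single (J m, m) 1)
          (∑ m ∈ univ.filter (fun m => J m = j'),
            (Matrix.of fun m'' i =>
              if m'' = m then (if i = mstar then (1:ℝ) else 0) else S i (J m'')).det)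
        else 0 := by
  set Rp : Matrix (Fin N) (Fin M) (MvPolynomial (Fin N × Fin M) ℝ) :=
    Matrix.of fun j m => if j ∈ C m then (X (j, m) : MvPolynomial (Fin N × Fin M) ℝ) else 0
    with hRp
  set Ap : Matrix (Fin M) (Fin M) (MvPolynomial (Fin N × Fin M) ℝ) :=
    @HMul.hMul _ _ _ Matrix.instHMulOfFintypeOfMulOfAddCommMonoid (S.map MvPolynomial.C) Rp with hAp
  set em : Fin M → MvPolynomial (Fin N × Fin M) ℝ := Pi.single mstar 1 with hem
  set Scol : Fin N → Fin M → MvPolynomial (Fin N × Fin M) ℝ :=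
    fun j i => MvPolynomial.C (S i j) with hScol
  set cc : Fin N → Fin M → MvPolynomial (Fin N × Fin M) ℝ :=
    fun j m => if j ∈ C m then X (j, m) else 0 with hcc
  set F := (Matrix.detRowAlternating :
    AlternatingMap (MvPolynomial (Fin N × Fin M) ℝ) (Fin M → MvPolynomial (Fin N × Fin M) ℝ)
      (MvPolynomial (Fin N × Fin M) ℝ) (Fin M)) with hF
  have hadj : ∀ m, Ap.adjugate m mstar = ((Apᵀ).updateRow m em).det := by
    intro m
    calc Ap.adjugate m mstar = (Ap.adjugate)ᵀ mstar m := rfl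
      _ = (Apᵀ).adjugate mstar m := by rw [Matrix.adjugate_transpose]
      _ = ((Apᵀ).updateRow m em).det := Matrix.adjugate_apply _ _ _
  have hdet : ∀ m : Fin M, ((Apᵀ).updateRow m em).det
      = ∑ J : Fin M → Fin N, F (fun m'' =>
          if m'' = m then (if J m'' = j' then em else 0)
          else cc (J m'') m'' • Scol (J m'')) := by
    intro m
    have hrow : ((Apᵀ).updateRow m em) = fun m'' => ∑ j : Fin N,
        (if m'' = m then (if j = j' then em else 0)
         else cc j m'' • Scol j) := by
      funext m''
      by_cases h : m'' = m
      · subst h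
        rw [Matrix.updateRow_self]
        simp
      · rw [Matrix.updateRow_ne h]
        funext i
        rw [Finset.sum_apply]
        rw [Matrix.transpose_apply, hAp, Matrix.mul_apply]
        apply Finset.sum_congr rfl
        intro j _
        simp only [Matrix.map_apply, Matrix.of_apply, if_neg h, Pi.smul_apply, hcc, hScol, hRp,
          smul_eq_mul]
        ring
      -- the two branches
    have : ((Apᵀ).updateRow m em).det
        = F (fun m'' => ∑ j : Fin N,
            (if m'' = m then (if j = j' then em else 0) else cc j m'' • Scol j)) := by
      rw [hF]
      show Matrix.detRowAlternating _ = _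
      rw [hrow]
    rw [this]
    exact F.toMultilinearMap.map_sum
      (g := fun m'' j => if m'' = m then (if j = j' then em else 0) else cc j m'' • Scol j)
  have hFdet : ∀ B : Matrix (Fin M) (Fin M) (MvPolynomial (Fin N × Fin M) ℝ), F B = B.det :=
    fun B => rfl
  have hkey : ∀ (J : Fin M → Fin N) (m : Fin M),
      Rp j' m * F (fun m'' => if m'' = m then (if J m'' = j' then em else 0)
          else cc (J m'') m'' • Scol (J m''))
      = if J m = j' then
          MvPolynomial.C ((Matrix.of fun m'' i =>
            if m'' = m then (if i = mstar then (1:ℝ) else 0) else S i (J m'')).det)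
          * ∏ m'', cc (J m'') m''
        else 0 := by
    intro J m
    by_cases hJm : J m = j'
    · rw [if_pos hJm]
      have hfun : (fun m'' => if m'' = m then (if J m'' = j' then em else 0)
            else cc (J m'') m'' • Scol (J m''))
          = fun m'' => (if m'' = m then (1 : MvPolynomial (Fin N × Fin M) ℝ) else cc (J m'') m'')
              • (if m'' = m then em else Scol (J m'')) := by
        funext m''
        by_cases h : m'' = m
        · subst h; simp [hJm]
        · simp [h]
      rw [hfun]
      rw [show F (fun m'' => (if m'' = m then (1 : MvPolynomial (Fin N × Fin M) ℝ)
              else cc (J m'') m'') • (if m'' = m then em else Scol (J m'')))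
          = (∏ m'' : Fin M, if m'' = m then (1 : MvPolynomial (Fin N × Fin M) ℝ)
              else cc (J m'') m'')
            • F (fun m'' => if m'' = m then em else Scol (J m''))
        from F.toMultilinearMap.map_smul_univ _ _]
      have hv : (fun m'' => if m'' = m then em else Scol (J m''))
          = ((Matrix.of fun m'' i => if m'' = m then (if i = mstar then (1:ℝ) else 0)
              else S i (J m'')).map MvPolynomial.C : Matrix (Fin M) (Fin M) _) := by
        funext m'' i
        by_cases h : m'' = m
        · subst h
          simp [hem, Pi.single_apply, apply_ite MvPolynomial.C]
        · simp [h, hScol]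
      rw [hv, hFdet, ← RingHom.mapMatrix_apply, ← RingHom.map_det]
      have hprod : (∏ m'' : Fin M, if m'' = m then (1 : MvPolynomial (Fin N × Fin M) ℝ)
            else cc (J m'') m'') = ∏ m'' ∈ univ.erase m, cc (J m'') m'' := by
        rw [← Finset.mul_prod_erase univ _ (Finset.mem_univ m), if_pos rfl, one_mul]
        exact Finset.prod_congr rfl (fun x hx => if_neg (Finset.ne_of_mem_erase hx))
      have hprod2 : (∏ m'' : Fin M, cc (J m'') m'')
          = cc j' m * ∏ m'' ∈ univ.erase m, cc (J m'') m'' := by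
        rw [← Finset.mul_prod_erase univ (fun m'' => cc (J m'') m'') (Finset.mem_univ m), hJm]
      rw [hprod, hprod2]
      show cc j' m * _ = _
      rw [smul_eq_mul]
      ring
    · rw [if_neg hJm]
      rw [show F (fun m'' => if m'' = m then (if J m'' = j' then em else 0)
            else cc (J m'') m'' • Scol (J m'')) = 0
          from F.toMultilinearMap.map_coord_zero m (by simp [hJm]), mul_zero]
  rw [Matrix.mul_apply]
  calc (∑ m, Rp j' m * Ap.adjugate m mstar)
      = ∑ m, ∑ J : Fin M → Fin N, Rp j' m * F (fun m'' =>
          if m'' = m then (if J m'' = j' then em else 0)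
          else cc (J m'') m'' • Scol (J m'')) := by
        refine Finset.sum_congr rfl (fun m _ => ?_)
        rw [hadj, hdet, Finset.mul_sum]
    _ = ∑ J : Fin M → Fin N, ∑ m, Rp j' m * F (fun m'' =>
          if m'' = m then (if J m'' = j' then em else 0)
          else cc (J m'') m'' • Scol (J m'')) := Finset.sum_comm
    _ = ∑ J : Fin M → Fin N, (∑ m ∈ univ.filter (fun m => J m = j'),
          MvPolynomial.C ((Matrix.of fun m'' i =>
            if m'' = m then (if i = mstar then (1:ℝ) else 0) else S i (J m'')).det))
          * ∏ m'', cc (J m'') m'' := by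
        refine Finset.sum_congr rfl (fun J _ => ?_)
        rw [Finset.sum_mul, Finset.sum_filter]
        exact Finset.sum_congr rfl (fun m _ => by rw [hkey J m])
    _ = _ := by
        refine Finset.sum_congr rfl (fun J _ => ?_)
        rw [← map_sum (MvPolynomial.C : ℝ →+* MvPolynomial (Fin N × Fin M) ℝ)]
        by_cases hmem : ∀ m, J m ∈ C m
        · rw [if_pos hmem]
          have : (∏ m'' : Fin M, cc (J m'') m'')
              = ∏ m'' : Fin M, (X (J m'', m'') : MvPolynomial (Fin N × Fin M) ℝ) :=
            Finset.prod_congr rfl (fun m'' _ => if_pos (hmem m''))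
          rw [this]
          have hX : (∏ m'' : Fin M, (X (J m'', m'') : MvPolynomial (Fin N × Fin M) ℝ))
              = monomial (∑ m : Fin M, Finsupp.single (J m, m) 1) 1 := by
            rw [monomial_sum_one]
            exact Finset.prod_congr rfl (fun m _ => by
              rw [← pow_one (X (J m, m) : MvPolynomial (Fin N × Fin M) ℝ), X_pow_eq_monomial])
          rw [hX, C_mul_monomial, mul_one]
        · rw [if_neg hmem]
          push_neg at hmem
          obtain ⟨m₀, hm₀⟩ := hmem
          have h0 : (∏ m'' : Fin M, cc (J m'') m'') = 0 :=
            Finset.prod_eq_zero (Finset.mem_univ m₀) (by simp [hcc, hm₀])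
          rw [h0, mul_zero]

open MvPolynomial Finset in
theorem stmt7core (M N : ℕ) (mstar : Fin M) (j' : Fin N)
    (S : Matrix (Fin M) (Fin N) ℝ) (C : Fin M → Finset (Fin N)) :
    ((Matrix.of fun (j : Fin N) (m : Fin M) =>
        if j ∈ C m then (X (j, m) : MvPolynomial (Fin N × Fin M) ℝ) else 0) *
      (S.map MvPolynomial.C *
        Matrix.of fun (j : Fin N) (m : Fin M) =>
          if j ∈ C m then (X (j, m) : MvPolynomial (Fin N × Fin M) ℝ) else 0).adjugate)
        j' mstar ≠ 0
    ↔ ∃ J : Fin M → Fin N, Function.Injective J ∧ (∀ m, J m ∈ C m) ∧ j' ∈ Set.range J ∧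
        (Matrix.of (fun i m => if J m = j' then (if i = mstar then (1 : ℝ) else 0)
            else S i (J m))).det ≠ 0 := by
  -- notation
  set Rp : Matrix (Fin N) (Fin M) (MvPolynomial (Fin N × Fin M) ℝ) :=
    Matrix.of fun j m => if j ∈ C m then (X (j, m) : MvPolynomial (Fin N × Fin M) ℝ) else 0
    with hRp
  set Ap : Matrix (Fin M) (Fin M) (MvPolynomial (Fin N × Fin M) ℝ) :=
    @HMul.hMul _ _ _ Matrix.instHMulOfFintypeOfMulOfAddCommMonoid (S.map MvPolynomial.C) Rp with hAp
  set c : Fin N → Fin M → MvPolynomial (Fin N × Fin M) ℝ :=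
    fun j m => if j ∈ C m then X (j, m) else 0 with hc
  set MatR : (Fin M → Fin N) → Fin M → Matrix (Fin M) (Fin M) ℝ :=
    fun J m => Matrix.of fun m'' i =>
      if m'' = m then (if i = mstar then (1:ℝ) else 0) else S i (J m'') with hMatR
  set cJ : (Fin M → Fin N) → ℝ :=
    fun J => ∑ m ∈ univ.filter (fun m => J m = j'), (MatR J m).det with hcJ
  set fJ : (Fin M → Fin N) → ((Fin N × Fin M) →₀ ℕ) :=
    fun J => ∑ m : Fin M, Finsupp.single (J m, m) 1 with hfJ
  -- step 1 : expansion
  have step1 : (Rp * Ap.adjugate) j' mstar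
      = ∑ J : Fin M → Fin N, if (∀ m, J m ∈ C m) then monomial (fJ J) (cJ J) else 0 := by
    exact stmt7aux1 M N mstar j' S C
  -- fJ determines J
  have fJ_inj : Function.Injective fJ := by
    exact stmt7aux0 M N j'
  -- coefficient extraction
  have coeffP : ∀ J : Fin M → Fin N, (∀ m, J m ∈ C m) →
      MvPolynomial.coeff (fJ J) ((Rp * Ap.adjugate) j' mstar) = cJ J := by
    intro J hmem
    rw [step1, MvPolynomial.coeff_sum]
    rw [Finset.sum_eq_single J]
    · rw [if_pos hmem, MvPolynomial.coeff_monomial, if_pos rfl]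
    · intro J₂ _ hne
      by_cases h2 : ∀ m, J₂ m ∈ C m
      · rw [if_pos h2, MvPolynomial.coeff_monomial, if_neg (fun h => hne (fJ_inj h))]
      · rw [if_neg h2, MvPolynomial.coeff_zero]
    · intro h; exact absurd (Finset.mem_univ J) h
  -- step 3 : combinatorial analysis of cJ
  have good_of : ∀ J : Fin M → Fin N, (∀ m, J m ∈ C m) → cJ J ≠ 0 →
      Function.Injective J ∧ j' ∈ Set.range J ∧
      (Matrix.of (fun i m => if J m = j' then (if i = mstar then (1 : ℝ) else 0)
            else S i (J m))).det ≠ 0 := by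
    exact fun J _ h => (stmt7aux2 M N mstar j' S MatR hMatR cJ hcJ).2 J h
  have cJ_of_good : ∀ J : Fin M → Fin N, Function.Injective J → j' ∈ Set.range J →
      cJ J = (Matrix.of (fun i m => if J m = j' then (if i = mstar then (1 : ℝ) else 0)
            else S i (J m))).det := by
    exact (stmt7aux2 M N mstar j' S MatR hMatR cJ hcJ).1
  constructor
  · intro hP
    change (Rp * Ap.adjugate) j' mstar ≠ 0 at hP
    rw [step1] at hP
    obtain ⟨J, -, hJ⟩ := Finset.exists_ne_zero_of_sum_ne_zero hP
    by_cases hmem : ∀ m, J m ∈ C m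
    · rw [if_pos hmem] at hJ
      have hcJ0 : cJ J ≠ 0 := fun h => hJ (by rw [h, MvPolynomial.monomial_zero])
      obtain ⟨hinj, hrange, hdet⟩ := good_of J hmem hcJ0
      exact ⟨J, hinj, hmem, hrange, hdet⟩
    · exact absurd (if_neg hmem) hJ
  · rintro ⟨J, hinj, hmem, hrange, hdet⟩
    intro hP
    change (Rp * Ap.adjugate) j' mstar = 0 at hP
    have := coeffP J hmem
    rw [hP, MvPolynomial.coeff_zero] at this
    rw [cJ_of_good J hinj hrange] at this
    exact hdet this.symm

/-- The flux response Φ^{m*}_{j'} is algebraically nonzero iff there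
exists a Child Selection J with j' ∈ J(M) and det(S^{J∖j' ∪ e_{m*}}) ≠ 0. -/
theorem stmt7 (M N : ℕ) (mstar : Fin M) (j' : Fin N)
    (S : Matrix (Fin M) (Fin N) ℝ)
    (C : Fin M → Finset (Fin N))
    (ι : ℝ → RatFunField (Fin N × Fin M))
    (hι : ∀ x, ι x = algebraMap (MvPolynomial (Fin N × Fin M) ℝ) _ (MvPolynomial.C x))
    (r : Fin N × Fin M → RatFunField (Fin N × Fin M))
    (hr : ∀ p, r p = algebraMap (MvPolynomial (Fin N × Fin M) ℝ) _ (MvPolynomial.X p))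
    (R : Matrix (Fin N) (Fin M) (RatFunField (Fin N × Fin M)))
    (hR : ∀ j m, R j m = if j ∈ C m then r (j, m) else 0)
    (A : Matrix (Fin M) (Fin M) (RatFunField (Fin N × Fin M)))
    (hA : A = S.map ι * R)
    (hdet : A.det ≠ 0) :
    -((R * A⁻¹) j' mstar) ≠ 0 ↔
      ∃ J : Fin M → Fin N,
        Function.Injective J ∧ (∀ m, J m ∈ C m) ∧ j' ∈ Set.range J ∧
        (Matrix.of (fun i m => if J m = j' then (if i = mstar then (1 : ℝ) else 0)
            else S i (J m))).det ≠ 0 := by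
  set φ := algebraMap (MvPolynomial (Fin N × Fin M) ℝ) (RatFunField (Fin N × Fin M)) with hφdef
  have hφ : Function.Injective φ := IsFractionRing.injective _ _
  set Rp : Matrix (Fin N) (Fin M) (MvPolynomial (Fin N × Fin M) ℝ) :=
    Matrix.of fun j m => if j ∈ C m then MvPolynomial.X (j, m) else 0 with hRpdef
  set Ap : Matrix (Fin M) (Fin M) (MvPolynomial (Fin N × Fin M) ℝ) :=
    @HMul.hMul _ _ _ Matrix.instHMulOfFintypeOfMulOfAddCommMonoid (S.map MvPolynomial.C) Rp with hApdef
  have hRmap : R = Rp.map φ := by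
    ext j m
    rw [hR, Matrix.map_apply]
    simp only [hRpdef, Matrix.of_apply]
    rw [apply_ite φ, map_zero, hr]
  have hAmap : A = Ap.map φ := by
    rw [hA, hApdef, Matrix.map_mul, ← hRmap]
    congr 1
    ext i j
    simp [hι, Matrix.map_apply]
  rw [neg_ne_zero, Matrix.inv_def, Matrix.mul_smul, Matrix.smul_apply, smul_eq_mul,
    Ring.inverse_eq_inv]
  have hinv : (A.det)⁻¹ ≠ 0 := inv_ne_zero hdet
  have hiff : A.det⁻¹ * (R * A.adjugate) j' mstar ≠ 0 ↔ (R * A.adjugate) j' mstar ≠ 0 := by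
    constructor
    · intro h h0
      exact h (by rw [h0, mul_zero])
    · intro h
      exact mul_ne_zero hinv h
  rw [hiff]
  have hentry : (R * A.adjugate) j' mstar = φ ((Rp * Ap.adjugate) j' mstar) := by
    rw [hRmap, hAmap]
    have hadj : (Ap.map φ).adjugate = Ap.adjugate.map φ := by
      rw [show Ap.map φ = φ.mapMatrix Ap from rfl, ← RingHom.map_adjugate]
      rfl
    rw [hadj, ← Matrix.map_mul]
    rfl
  rw [hentry]
  rw [show (φ ((Rp * Ap.adjugate) j' mstar) ≠ 0) ↔ ((Rp * Ap.adjugate) j' mstar ≠ 0)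
    from not_congr (map_eq_zero_iff φ hφ)]
  exact stmt7core M N mstar j' S C
end

section
/- There exists a nondegenerate metabolic network in which a metabolite has zero algebraic self-influence: for the 5-metabolite, 7-reaction network with stoichiometric matrix S having columns f_A = e_A, f_C = e_C, S¹ = (-1,1,0,0,0)ᵀ, S² = (-1,-1,-1,1,0)ᵀ, S³ = (0,-1,-1,0,1)ᵀ, S⁴ = (0,0,0,-1,0)ᵀ, S⁵ = (0,0,0,0,-1)ᵀ over rows (A,B,C,D,E), det(SR) ≠ 0 algebraically, yet for every Partial Child Selection J^{∨A} the matrix S^{J^{∨A} ∪ e_A} is singular, hence (δx)^{A}_{A} ≡ 0: the concentration of A does not respond to a targeted perturbation of A. -/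
open scoped Classical

/-- Stoichiometric matrix of the self-influence counterexample: rows A,B,C,D,E =
0..4; columns f_A, f_C, 1, 2, 3, 4, 5 = 0..6. -/
def S₅ : Matrix (Fin 5) (Fin 7) ℝ :=
  !![1, 0, -1, -1, 0, 0, 0;
     0, 0, 1, -1, -1, 0, 0;
     0, 1, 0, -1, -1, 0, 0;
     0, 0, 0, 1, 0, -1, 0;
     0, 0, 0, 0, 1, 0, -1]

/-- Input metabolites of each reaction: f_A, f_C have none; 1 has input A;
2 has inputs A,B,C; 3 has inputs B,C; 4 has input D; 5 has input E. -/
def inputs₅ : Fin 7 → Finset (Fin 5) := ![∅, ∅, {0}, {0, 1, 2}, {1, 2}, {3}, {4}]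

/-- A Partial Child Selection J^{∨A}: an injective map assigning to each of
B,C,D,E one of its outgoing reactions. -/
def PCS₅ (P : {m : Fin 5 // m ≠ 0} → Fin 7) : Prop :=
  Function.Injective P ∧ ∀ m, m.1 ∈ inputs₅ (P m)

/-- The matrix S^{J^{∨A} ∪ e_A}: the A-column is e_A, the other columns are the
stoichiometric columns selected by the Partial Child Selection. -/
noncomputable def MatP (P : {m : Fin 5 // m ≠ 0} → Fin 7) : Matrix (Fin 5) (Fin 5) ℝ :=
  Matrix.of fun i m => if h : m = 0 then (if i = 0 then (1 : ℝ) else 0) else S₅ i (P ⟨m, h⟩)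

/-- The symbolic derivative matrix R, with indeterminate entries r_{jm} on input pairs. -/
noncomputable def R₅ :
    Matrix (Fin 7) (Fin 5) (FractionRing (MvPolynomial (Fin 7 × Fin 5) ℝ)) :=
  Matrix.of fun j m =>
    if m ∈ inputs₅ j then
      algebraMap (MvPolynomial (Fin 7 × Fin 5) ℝ) _ (MvPolynomial.X (j, m))
    else 0

/-- The Jacobian matrix SR over the field of rational functions in the r_{jm}. -/
noncomputable def A₅ :
    Matrix (Fin 5) (Fin 5) (FractionRing (MvPolynomial (Fin 7 × Fin 5) ℝ)) :=
  S₅.map (fun x => algebraMap (MvPolynomial (Fin 7 × Fin 5) ℝ) _ (MvPolynomial.C x)) * R₅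

/- ### Auxiliary definitions and lemmas -/

/-- Polynomial version of `R₅`. -/
noncomputable def R₅' : Matrix (Fin 7) (Fin 5) (MvPolynomial (Fin 7 × Fin 5) ℝ) :=
  Matrix.of fun j m => if m ∈ inputs₅ j then MvPolynomial.X (j, m) else 0

/-- Polynomial version of `A₅`. -/
noncomputable def M₅ : Matrix (Fin 5) (Fin 5) (MvPolynomial (Fin 7 × Fin 5) ℝ) :=
  S₅.map MvPolynomial.C * R₅'

lemma mul_apply₅ {l m n α : Type*} [Fintype m] [Mul α] [AddCommMonoid α] {M : Matrix l m α}
    {N : Matrix m n α} {i k} : (@HMul.hMul (Matrix l m α) (Matrix m n α) (Matrix l n α)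
      CStarMatrix.instHMulOfFintypeOfMulOfAddCommMonoid M N) i k = ∑ j, M i j * N j k :=
  rfl

lemma A₅_eq :
    A₅ = (algebraMap (MvPolynomial (Fin 7 × Fin 5) ℝ)
      (FractionRing (MvPolynomial (Fin 7 × Fin 5) ℝ))).mapMatrix M₅ := by
  ext i m
  simp [A₅, M₅, R₅, R₅', mul_apply₅, RingHom.mapMatrix_apply, Matrix.map_apply,
    map_sum, apply_ite
      (algebraMap (MvPolynomial (Fin 7 × Fin 5) ℝ) (FractionRing (MvPolynomial (Fin 7 × Fin 5) ℝ)))]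

/-- Evaluation point showing nondegeneracy. -/
noncomputable def v₅ : Fin 7 × Fin 5 → ℝ := fun p => if p = (4, 1) then 2 else 1


lemma cons_val_five {m : ℕ} {α : Type*} (x : α) (u : Fin (m + 5) → α) :
    Matrix.vecCons x u 5 =
      Matrix.vecHead (Matrix.vecTail (Matrix.vecTail (Matrix.vecTail (Matrix.vecTail u)))) := rfl

lemma cons_val_six {m : ℕ} {α : Type*} (x : α) (u : Fin (m + 6) → α) :
    Matrix.vecCons x u 6 =
      Matrix.vecHead (Matrix.vecTail (Matrix.vecTail (Matrix.vecTail (Matrix.vecTail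
        (Matrix.vecTail u))))) := rfl

lemma map_M₅ : (MvPolynomial.aeval v₅ : MvPolynomial (Fin 7 × Fin 5) ℝ →ₐ[ℝ] ℝ).mapMatrix M₅ =
    !![-2, -1, -1, 0, 0; 0, -3, -2, 0, 0; -1, -3, -2, 0, 0; 1, 1, 1, -1, 0; 0, 2, 1, 0, -1] := by
  ext i m
  fin_cases i <;> fin_cases m <;>
    simp (config := { decide := true }) [M₅, S₅, R₅', inputs₅, v₅, mul_apply₅,
      Fin.sum_univ_seven, cons_val_five, cons_val_six] <;>
      norm_num [Matrix.vecHead, Matrix.vecTail]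

set_option maxRecDepth 40000 in
lemma detN₅ : (!![-2, -1, -1, 0, 0; 0, -3, -2, 0, 0; -1, -3, -2, 0, 0; 1, 1, 1, -1, 0;
    0, 2, 1, 0, -1] : Matrix (Fin 5) (Fin 5) ℝ).det = 1 := by
  simp [Matrix.det_succ_row_zero, Fin.sum_univ_succ]
  simp [Fin.succAbove, Fin.lt_def]
  norm_num

lemma M₅_det_ne : M₅.det ≠ 0 := by
  intro h
  have h2 : ((MvPolynomial.aeval v₅ :
      MvPolynomial (Fin 7 × Fin 5) ℝ →ₐ[ℝ] ℝ).mapMatrix M₅).det = 0 := by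
    rw [← AlgHom.map_det, h, map_zero]
  rw [map_M₅, detN₅] at h2
  norm_num at h2

lemma M₅_row_eq : ∀ m : Fin 4, M₅ 1 m.succ = M₅ 2 m.succ := by
  intro m
  fin_cases m <;>
    simp (config := { decide := true }) [M₅, S₅, R₅', inputs₅, mul_apply₅,
      Fin.sum_univ_seven, cons_val_five, cons_val_six]

lemma M₅_adjugate : M₅.adjugate 0 0 = 0 := by
  rw [Matrix.adjugate_apply, Matrix.det_succ_row_zero]
  have hsub : ∀ g : Fin 4 → Fin 5, g = Fin.succ →
      ((M₅.updateRow 0 (Pi.single 0 1)).submatrix Fin.succ g).det = 0 := by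
    rintro g rfl
    apply Matrix.det_zero_of_row_eq (show (0 : Fin 4) ≠ 1 by decide)
    funext c
    simp only [Matrix.submatrix_apply, Matrix.updateRow_ne
      (show (0:Fin 4).succ ≠ 0 by decide), Matrix.updateRow_ne (show (1:Fin 4).succ ≠ 0 by decide)]
    exact M₅_row_eq c
  simp [Fin.sum_univ_succ, Pi.single_apply, Fin.succAbove_zero, hsub _ rfl,
    hsub _ Fin.succAbove_zero]

lemma key₅ : ∀ (j : Fin 7) (m : Fin 5), m ≠ 0 → m ∈ inputs₅ j →
    (j = 3 ∨ j = 4 ∨ j = 5 ∨ j = 6) := by decide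

/-- There exists a nondegenerate network (the one above) in which a
metabolite has zero algebraic self-influence: det(SR) ≠ 0 algebraically, yet every
Partial Child Selection J^{∨A} yields a singular matrix S^{J^{∨A} ∪ e_A}, and hence
(δx)^A_A = -((SR)⁻¹)^A_A ≡ 0. -/
theorem stmt12 :
    A₅.det ≠ 0 ∧
    (∀ P, PCS₅ P → (MatP P).det = 0) ∧
    -(A₅⁻¹ 0 0) = 0 := by
  refine ⟨?_, ?_, ?_⟩
  · rw [A₅_eq, ← RingHom.map_det]
    exact (map_ne_zero_iff _ (IsFractionRing.injective _ _)).mpr M₅_det_ne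
  · intro P hP
    apply Matrix.det_zero_of_row_eq (show (1 : Fin 5) ≠ 2 by decide)
    funext m
    by_cases h : m = 0
    · subst h; simp [MatP]
    · simp only [MatP, Matrix.of_apply, dif_neg h]
      rcases key₅ (P ⟨m, h⟩) m h (hP.2 ⟨m, h⟩) with h' | h' | h' | h' <;>
        rw [h'] <;> norm_num [S₅, cons_val_five, cons_val_six, Matrix.cons_val_two, Matrix.vecHead,
          Matrix.vecTail, Matrix.cons_val_three, Matrix.cons_val_four]
  · have hadj : A₅.adjugate 0 0 = 0 := by
      rw [A₅_eq, ← RingHom.map_adjugate]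
      simp [RingHom.mapMatrix_apply, Matrix.map_apply, M₅_adjugate]
    rw [Matrix.inv_def]
    simp [Matrix.smul_apply, hadj]
end

section
/- Transitivity of metabolite influence fails in multimolecular networks: in the 3-metabolite network with stoichiometric columns S¹=(-1,-1,1)ᵀ, S²=(0,-1,0)ᵀ, S³=(0,0,-1)ᵀ over rows (A,B,C) and input sets {A,B} for reaction 1, {B} for 2, {C} for 3, one has B ⇝ A (i.e., (δx)^{B}_{A} ≢ 0) and A ⇝ C ((δx)^{A}_{C} ≢ 0), but B ⇝̸ C ((δx)^{B}_{C} ≡ 0 as a rational function of the r_{jm}). -/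
/-- Stoichiometric matrix of the counterexample network: metabolites A,B,C = 0,1,2,
reactions 1,2,3 = 0,1,2; S¹=(-1,-1,1)ᵀ, S²=(0,-1,0)ᵀ, S³=(0,0,-1)ᵀ. -/
def S₃ : Matrix (Fin 3) (Fin 3) ℝ := !![-1, 0, 0; -1, -1, 0; 1, 0, -1]

/-- Input metabolites of each reaction: {A,B}, {B}, {C}. -/
def inputs₃ : Fin 3 → Finset (Fin 3) := ![{0, 1}, {1}, {2}]

/-- Metabolite influence m* ⇝ m': by the metabolite-response theorem, the response
(δx)^{m*}_{m'} is algebraically nonzero iff some Partial Child Selection J^{∨m'}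
satisfies det(S^{J^{∨m'} ∪ e_{m*}}) ≠ 0. -/
def MetInfl (mstar m' : Fin 3) : Prop :=
  ∃ P : {m : Fin 3 // m ≠ m'} → Fin 3,
    Function.Injective P ∧ (∀ m, m.1 ∈ inputs₃ (P m)) ∧
    (Matrix.of (fun i mm => if h : mm = m' then (if i = mstar then (1 : ℝ) else 0)
        else S₃ i (P ⟨mm, h⟩))).det ≠ 0

/-- Transitivity of metabolite influence fails: B ⇝ A and A ⇝ C,
but B ⇝̸ C. -/
theorem stmt15 : MetInfl 1 0 ∧ MetInfl 0 2 ∧ ¬MetInfl 1 2 := by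
  refine ⟨⟨fun m => if m.1 = 1 then 0 else 2, by decide, by decide, ?_⟩,
          ⟨fun m => if m.1 = 0 then 0 else 1, by decide, by decide, ?_⟩, ?_⟩
  · simp +decide [Matrix.det_fin_three, S₃]
  · simp +decide [Matrix.det_fin_three, S₃]
  · rintro ⟨P, hinj, hmem, hdet⟩
    have h0 : P ⟨0, by decide⟩ = 0 := by
      have := hmem ⟨0, by decide⟩
      revert this
      generalize P ⟨0, by decide⟩ = j
      fin_cases j <;> decide
    have h1 : P ⟨1, by decide⟩ = 1 := by
      have hm := hmem ⟨1, by decide⟩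
      have hne : P ⟨1, by decide⟩ ≠ P ⟨0, by decide⟩ := fun h => by
        have := hinj h; simp at this
      rw [h0] at hne
      revert hm hne
      generalize P ⟨1, by decide⟩ = j
      fin_cases j <;> decide
    apply hdet
    rw [Matrix.det_fin_three]
    norm_num [h0, h1, S₃, Fin.ext_iff]
    rfl
end

section
/- In the same 3-metabolite counterexample network, B ⇝ A and A ⇝ 3 (the flux of reaction 3 responds to perturbing A), but B ⇝̸ 3: there is no Child Selection J containing reaction 3 with det(S^{J∖3 ∪ e_B}) ≠ 0. -/
/-- Flux influence m* ⇝ j': by the flux-response theorem, Φ^{m*}_{j'} is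
algebraically nonzero iff some Child Selection J containing j' satisfies
det(S^{J∖j' ∪ e_{m*}}) ≠ 0. -/
def FluxInfl (mstar : Fin 3) (j' : Fin 3) : Prop :=
  ∃ J : Fin 3 → Fin 3,
    Function.Injective J ∧ (∀ m, m ∈ inputs₃ (J m)) ∧ j' ∈ Set.range J ∧
    (Matrix.of (fun i m => if J m = j' then (if i = mstar then (1 : ℝ) else 0)
        else S₃ i (J m))).det ≠ 0

/-- B ⇝ A and A ⇝ 3 (flux of reaction 3), but B ⇝̸ 3. -/
theorem stmt16 : MetInfl 1 0 ∧ FluxInfl 0 2 ∧ ¬FluxInfl 1 2 := by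
  refine ⟨?_, ?_, ?_⟩
  · refine ⟨fun m => if m.1 = 1 then 0 else 2, by decide, by decide, ?_⟩
    have : (Matrix.of (fun i mm => if h : mm = (0 : Fin 3) then (if i = (1 : Fin 3) then (1 : ℝ) else 0)
        else S₃ i (if mm = 1 then 0 else 2))) = !![0,-1,0;1,-1,0;0,1,-1] := by
      ext i j
      fin_cases i <;> fin_cases j <;> simp [S₃, Matrix.vecHead, Matrix.vecTail]
    rw [this, Matrix.det_fin_three]
    norm_num [Matrix.vecHead, Matrix.vecTail, Matrix.cons_val_two]
  · refine ⟨id, fun _ _ h => h, by decide, ⟨2, rfl⟩, ?_⟩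
    have : (Matrix.of (fun i m => if id m = (2 : Fin 3) then (if i = (0 : Fin 3) then (1 : ℝ) else 0)
        else S₃ i (id m))) = !![-1,0,1;-1,-1,0;1,0,0] := by
      ext i j
      fin_cases i <;> fin_cases j <;> simp [S₃, Matrix.vecHead, Matrix.vecTail]
    rw [this, Matrix.det_fin_three]
    norm_num [Matrix.vecHead, Matrix.vecTail, Matrix.cons_val_two]
  · rintro ⟨J, hinj, hin, -, hdet⟩
    have key0 : ∀ r : Fin 3, (0 : Fin 3) ∈ inputs₃ r → r = 0 := by decide
    have key2 : ∀ r : Fin 3, (2 : Fin 3) ∈ inputs₃ r → r = 2 := by decide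
    have key1 : ∀ r : Fin 3, (1 : Fin 3) ∈ inputs₃ r → r = 0 ∨ r = 1 := by decide
    have h0 : J 0 = 0 := key0 _ (hin 0)
    have h2 : J 2 = 2 := key2 _ (hin 2)
    have h1 : J 1 = 1 := by
      rcases key1 _ (hin 1) with h | h
      · exact absurd (hinj (h.trans h0.symm)) (by decide)
      · exact h
    apply hdet
    have : (Matrix.of (fun i m => if J m = (2 : Fin 3) then (if i = (1 : Fin 3) then (1 : ℝ) else 0)
        else S₃ i (J m))) = !![-1,0,0;-1,-1,1;1,0,0] := by
      ext i j
      fin_cases i <;> fin_cases j <;> simp [S₃, Matrix.vecHead, Matrix.vecTail, h0, h1, h2]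
    rw [this, Matrix.det_fin_three]
    norm_num [Matrix.vecHead, Matrix.vecTail, Matrix.cons_val_two]
end

section
/- In a monomolecular reaction network (each reaction has at most one input and one output metabolite, each with stoichiometric coefficient 1, with inflows and outflows routed through an auxiliary zero-complex vertex), for a metabolite m* and an element p' (metabolite or reaction), the response of p' to a targeted perturbation of the concentration of m* is algebraically nonzero if and only if p' is reachable from m* via a directed path in the network digraph. -/
open scoped Classical

section Helpers

variable {K : Type*} [Field K] {M : ℕ}

/-- Submodule of vectors supported on a set. -/
private def suppSub (K : Type*) [Field K] (M : ℕ) (U : Set (Fin M)) :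
    Submodule K (Fin M → K) where
  carrier := {v | ∀ i, i ∉ U → v i = 0}
  add_mem' := by intro a b ha hb i hi; simp [ha i hi, hb i hi]
  zero_mem' := by intro i _; rfl
  smul_mem' := by intro c v hv i hi; simp [hv i hi]

private lemma mem_suppSub {U : Set (Fin M)} {v : Fin M → K} :
    v ∈ suppSub K M U ↔ ∀ i, i ∉ U → v i = 0 := Iff.rfl

private lemma mulVec_mem_suppSub {A : Matrix (Fin M) (Fin M) K} {U : Set (Fin M)}
    (hU : ∀ i c, i ∉ U → c ∈ U → A i c = 0) {v : Fin M → K} (hv : v ∈ suppSub K M U) :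
    A.mulVec v ∈ suppSub K M U := by
  intro i hi
  show ∑ c : Fin M, A i c * v c = 0
  refine Finset.sum_eq_zero fun c _ => ?_
  by_cases hc : c ∈ U
  · rw [hU i c hi hc, zero_mul]
  · rw [hv c hc, mul_zero]

private lemma mulVec_inj {A : Matrix (Fin M) (Fin M) K} (hdet : A.det ≠ 0) :
    Function.Injective (A.mulVec) := by
  have hunit : IsUnit A.det := isUnit_iff_ne_zero.mpr hdet
  intro a b hab
  have h := congrArg (A⁻¹.mulVec) hab
  simpa [Matrix.mulVec_mulVec, Matrix.nonsing_inv_mul A hunit, Matrix.one_mulVec] using h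

/-- If the columns indexed by U are supported on rows in U, then the inverse has zero
entries in the corresponding block. -/
private lemma helperInv (A : Matrix (Fin M) (Fin M) K) (hdet : A.det ≠ 0)
    (U : Set (Fin M)) (hU : ∀ i c, i ∉ U → c ∈ U → A i c = 0)
    (mstar m' : Fin M) (hm : mstar ∈ U) (hm' : m' ∉ U) : A⁻¹ m' mstar = 0 := by
  classical
  set V := suppSub K M U with hV
  have hmap : ∀ v : V, A.mulVecLin v ∈ V := fun v => mulVec_mem_suppSub hU v.2
  let f' : V →ₗ[K] V := (A.mulVecLin.domRestrict V).codRestrict V hmap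
  have hinj : Function.Injective f' := by
    intro a b hab
    have : A.mulVec a = A.mulVec b := congrArg Subtype.val hab
    exact Subtype.ext (mulVec_inj hdet this)
  have hsurj : Function.Surjective f' := LinearMap.surjective_of_injective hinj
  have hsingle : (Pi.single mstar 1 : Fin M → K) ∈ V := by
    intro i hi
    exact Pi.single_eq_of_ne (fun h : i = mstar => hi (h ▸ hm)) 1
  obtain ⟨v, hv⟩ := hsurj ⟨Pi.single mstar 1, hsingle⟩
  have hv' : A.mulVec v = Pi.single mstar 1 := congrArg Subtype.val hv
  have h2 : A⁻¹.mulVec (Pi.single mstar 1) = (v : Fin M → K) := by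
    rw [← hv', Matrix.mulVec_mulVec, Matrix.nonsing_inv_mul A (isUnit_iff_ne_zero.mpr hdet),
      Matrix.one_mulVec]
  have h3 : A⁻¹ m' mstar * 1 = (v : Fin M → K) m' := by
    have := congrFun h2 m'
    rwa [Matrix.mulVec_single] at this
  rw [mul_one] at h3
  rw [h3]
  exact v.2 m' hm'

/-- A "trap set" (a nonempty set whose columns are supported in it with zero column sums)
forces the determinant to vanish. -/
private lemma helperTrap (A : Matrix (Fin M) (Fin M) K) (hdet : A.det ≠ 0)
    (W : Finset (Fin M)) (hne : W.Nonempty)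
    (hU : ∀ i c, i ∉ W → c ∈ (W : Set (Fin M)) → A i c = 0)
    (hCS : ∀ c ∈ W, ∑ r ∈ W, A r c = 0) : False := by
  classical
  set V := suppSub K M (W : Set (Fin M)) with hV
  let ψ : (Fin M → K) →ₗ[K] K :=
    { toFun := fun v => ∑ r ∈ W, v r
      map_add' := by intro a b; simp [Finset.sum_add_distrib]
      map_smul' := by intro c v; simp [Finset.mul_sum] }
  have hψA : ∀ v : V, ψ (A.mulVecLin v) = 0 := by
    intro v
    show ∑ r ∈ W, ∑ c : Fin M, A r c * (v : Fin M → K) c = 0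
    rw [Finset.sum_comm]
    refine Finset.sum_eq_zero fun c _ => ?_
    by_cases hc : c ∈ W
    · rw [← Finset.sum_mul, hCS c hc, zero_mul]
    · refine Finset.sum_eq_zero fun r _ => ?_
      rw [v.2 c hc, mul_zero]
  set V' : Submodule K (Fin M → K) := V ⊓ LinearMap.ker ψ with hV'
  obtain ⟨w₀, hw₀⟩ := hne
  have hsingleV : (Pi.single w₀ 1 : Fin M → K) ∈ V := by
    intro i hi
    exact Pi.single_eq_of_ne (fun h : i = w₀ => hi (by rw [h]; exact hw₀)) 1
  have hsingleψ : ψ (Pi.single w₀ 1 : Fin M → K) = 1 := by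
    show (∑ r ∈ W, Pi.single w₀ (1 : K) r) = 1
    rw [Finset.sum_eq_single w₀]
    · simp
    · intro b _ hb; exact Pi.single_eq_of_ne hb 1
    · intro h; exact absurd hw₀ h
  have hlt : V' < V := by
    refine lt_of_le_of_ne inf_le_left ?_
    intro h
    have : (Pi.single w₀ 1 : Fin M → K) ∈ V' := h ▸ hsingleV
    have h2 : ψ (Pi.single w₀ 1 : Fin M → K) = 0 := this.2
    rw [hsingleψ] at h2
    exact one_ne_zero h2
  have hmap : ∀ v : V, A.mulVecLin v ∈ V' := fun v =>
    ⟨mulVec_mem_suppSub hU v.2, LinearMap.mem_ker.mpr (hψA v)⟩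
  let f'' : V →ₗ[K] V' := (A.mulVecLin.domRestrict V).codRestrict V' hmap
  have hinj : Function.Injective f'' := by
    intro a b hab
    have : A.mulVec a = A.mulVec b := congrArg Subtype.val hab
    exact Subtype.ext (mulVec_inj hdet this)
  have h1 : Module.finrank K V ≤ Module.finrank K V' :=
    LinearMap.finrank_le_finrank_of_injective hinj
  have h2 : Module.finrank K V' < Module.finrank K V :=
    Submodule.finrank_lt_finrank_of_lt hlt
  omega

end Helpers

/-- Extraction of a duplicate-free chain from reflexive-transitive closure. -/
private lemma nodupChain {α : Type*} {r : α → α → Prop} {a b : α}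
    (h : Relation.ReflTransGen r a b) :
    ∃ l : List α, List.Chain r a l ∧ (a :: l).getLast (List.cons_ne_nil _ _) = b ∧
      (a :: l).Nodup := by
  classical
  induction h using Relation.ReflTransGen.head_induction_on with
  | refl => exact ⟨[], List.Chain.nil, rfl, List.nodup_singleton _⟩
  | head hstep _ ih =>
    rename_i a c _
    obtain ⟨l, hc, hl, hn⟩ := ih
    by_cases ha : a ∈ c :: l
    · obtain ⟨s, t, hst⟩ := List.append_of_mem ha
      refine ⟨t, ?_, ?_, ?_⟩
      · have hch : List.Chain' r (c :: l) := hc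
        have hsuf : (a :: t) <:+ (c :: l) := ⟨s, hst.symm⟩
        exact (hch.suffix hsuf : List.Chain' r (a :: t))
      · have h0 : (c :: l).getLast? = some b := by
          rw [List.getLast?_eq_getLast (List.cons_ne_nil _ _), hl]
        rw [hst, List.getLast?_append] at h0
        rw [List.getLast?_eq_getLast (l := a :: t) (List.cons_ne_nil _ _)] at h0
        simpa using h0
      · have hsuf : (a :: t) <:+ (c :: l) := ⟨s, hst.symm⟩
        exact hn.sublist hsuf.sublist
    · refine ⟨c :: l, List.Chain.cons hstep hc, ?_, List.nodup_cons.mpr ⟨ha, hn⟩⟩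
      rw [List.getLast_cons_cons]
      exact hl

/-- Greedy construction of an "escape" routing given the no-trap property. -/
private lemma escapeLemma {M N : ℕ} (src tgt : Fin N → Option (Fin M)) (j₀ : Fin N)
    (notrap : ∀ W : Finset (Fin M), W.Nonempty →
      ∃ c ∈ W, ∃ j, src j = some c ∧ ∀ m₂, tgt j = some m₂ → m₂ ∉ W)
    (T : Finset (Fin M)) :
    ∃ (g : Fin M → Fin N) (ρ : Fin M → ℕ), ∀ c ∈ T, src (g c) = some c ∧
      ∀ m₂, tgt (g c) = some m₂ → m₂ ∈ T → ρ m₂ < ρ c := by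
  classical
  induction T using Finset.strongInduction with
  | _ T ih =>
    rcases T.eq_empty_or_nonempty with hT | hT
    · exact ⟨fun _ => j₀, fun _ => 0, by simp [hT]⟩
    · obtain ⟨c, hc, j, hj, hjt⟩ := notrap T hT
      obtain ⟨g', ρ', hIH⟩ := ih (T.erase c) (Finset.erase_ssubset hc)
      refine ⟨Function.update g' c j, fun x => if x = c then 0 else ρ' x + 1, ?_⟩
      intro d hd
      by_cases hdc : d = c
      · subst hdc
        rw [Function.update_self]
        exact ⟨hj, fun m₂ hm₂ hm₂T => absurd hm₂T (hjt m₂ hm₂)⟩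
      · rw [Function.update_of_ne hdc]
        obtain ⟨h1, h2⟩ := hIH d (Finset.mem_erase.mpr ⟨hdc, hd⟩)
        refine ⟨h1, fun m₂ hm₂ hm₂T => ?_⟩
        by_cases hm₂c : m₂ = c
        · simp [hm₂c, hdc]
        · have := h2 m₂ hm₂ (Finset.mem_erase.mpr ⟨hm₂c, hm₂T⟩)
          simp only [if_neg hm₂c, if_neg hdc]
          omega
set_option maxHeartbeats 1000000 in
/-- In a monomolecular reaction network (each reaction j has at most
one input metabolite `src j` and at most one output metabolite `tgt j`, with
coefficient 1; `none` plays the role of the zero-complex; no self-loops), the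
response of an element p' — a metabolite m' or a reaction j' — to a targeted
perturbation of the concentration of m* is algebraically nonzero iff p' is
reachable from m* by a directed path. -/
theorem stmt17 (M N : ℕ)
    (src tgt : Fin N → Option (Fin M))
    (hnoself : ∀ j, src j ≠ tgt j)
    (S : Matrix (Fin M) (Fin N) ℝ)
    (hS : ∀ i j, S i j =
      (if src j = some i then (-1 : ℝ) else 0) + (if tgt j = some i then 1 else 0))
    (r : Fin N × Fin M → RatFunField (Fin N × Fin M))
    (hr : ∀ p, r p = algebraMap (MvPolynomial (Fin N × Fin M) ℝ) _ (MvPolynomial.X p))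
    (R : Matrix (Fin N) (Fin M) (RatFunField (Fin N × Fin M)))
    (hR : ∀ j m, R j m = if src j = some m then r (j, m) else 0)
    (A : Matrix (Fin M) (Fin M) (RatFunField (Fin N × Fin M)))
    (hA : A = S.map (fun x =>
      algebraMap (MvPolynomial (Fin N × Fin M) ℝ) _ (MvPolynomial.C x)) * R)
    (hdet : A.det ≠ 0)
    (step : Fin M → Fin M → Prop)
    (hstep : ∀ u v, step u v ↔ ∃ j, src j = some u ∧ tgt j = some v)
    (mstar : Fin M) :
    (∀ m' : Fin M, -(A⁻¹ m' mstar) ≠ 0 ↔ Relation.ReflTransGen step mstar m') ∧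
    (∀ j' : Fin N, -((R * A⁻¹) j' mstar) ≠ 0 ↔
      ∃ m, Relation.ReflTransGen step mstar m ∧ src j' = some m) := by
  classical
  have halg_inj : Function.Injective
      (algebraMap (MvPolynomial (Fin N × Fin M) ℝ) (RatFunField (Fin N × Fin M))) :=
    IsFractionRing.injective _ _
  set Ap : Matrix (Fin M) (Fin M) (MvPolynomial (Fin N × Fin M) ℝ) :=
    Matrix.of (fun i c => ∑ j : Fin N,
      if src j = some c then MvPolynomial.C (S i j) * MvPolynomial.X (j, c) else 0) with hAp
  have hApA : A = Ap.map (algebraMap _ _) := by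
    rw [hA]
    ext i c
    refine Matrix.mul_apply.trans ?_
    rw [Matrix.map_apply, hAp, Matrix.of_apply, map_sum]
    refine Finset.sum_congr rfl fun j _ => ?_
    rw [Matrix.map_apply, hR j c, hr]
    split_ifs with h
    · rw [map_mul]
    · rw [map_zero, mul_zero]
  have hAent : ∀ i c, A i c = ∑ j : Fin N, if src j = some c then
      algebraMap (MvPolynomial (Fin N × Fin M) ℝ) (RatFunField (Fin N × Fin M))
        (MvPolynomial.C (S i j)) * algebraMap (MvPolynomial (Fin N × Fin M) ℝ) (RatFunField (Fin N × Fin M)) (MvPolynomial.X (j, c)) else 0 := by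
    intro i c
    rw [hApA, Matrix.map_apply, hAp, Matrix.of_apply, map_sum]
    refine Finset.sum_congr rfl fun j _ => ?_
    split_ifs with h
    · rw [map_mul]
    · rw [map_zero]
  have hm0 : ∀ i c : Fin M, i ≠ c → (∀ j, src j = some c → tgt j ≠ some i) → A i c = 0 := by
    intro i c hic h
    rw [hAent i c]
    refine Finset.sum_eq_zero fun j _ => ?_
    split_ifs with hj
    · have h1 : ¬ (src j = some i) := by
        rw [hj]
        intro hh
        exact hic (Option.some_injective _ hh).symm
      have hS0 : S i j = 0 := by rw [hS, if_neg h1, if_neg (h j hj)]; ring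
      rw [hS0, map_zero, map_zero, zero_mul]
    · rfl
  have hunit : IsUnit A.det := isUnit_iff_ne_zero.mpr hdet
  have notrap : ∀ W : Finset (Fin M), W.Nonempty →
      ∃ c ∈ W, ∃ j, src j = some c ∧ ∀ m₂, tgt j = some m₂ → m₂ ∉ W := by
    intro W hne
    by_contra hcon
    push_neg at hcon
    refine helperTrap A hdet W hne ?_ ?_
    · intro i c hi hc
      have hc' : c ∈ W := hc
      refine hm0 i c (fun h => hi (by rw [h]; exact hc')) ?_
      intro j hj hti
      obtain ⟨m₂, h1, h2⟩ := hcon c hc' j hj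
      rw [hti] at h1
      exact hi (by rw [Option.some_injective _ h1]; exact h2)
    · intro c hc
      have hrw : ∑ p ∈ W, A p c = ∑ j : Fin N, if src j = some c then
          algebraMap (MvPolynomial (Fin N × Fin M) ℝ) (RatFunField (Fin N × Fin M))
            (MvPolynomial.C (∑ p ∈ W, S p j)) * algebraMap (MvPolynomial (Fin N × Fin M) ℝ) (RatFunField (Fin N × Fin M)) (MvPolynomial.X (j, c))
          else 0 := by
        rw [Finset.sum_congr rfl fun p _ => hAent p c, Finset.sum_comm]
        refine Finset.sum_congr rfl fun j _ => ?_
        by_cases hj : src j = some c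
        · simp only [if_pos hj]
          rw [← Finset.sum_mul, map_sum (MvPolynomial.C : ℝ →+* _), map_sum]
        · simp only [if_neg hj, Finset.sum_const_zero]
      rw [hrw]
      refine Finset.sum_eq_zero fun j _ => ?_
      by_cases hj : src j = some c
      · obtain ⟨m₂, h1, h2⟩ := hcon c hc j hj
        have hsum : ∑ p ∈ W, S p j = 0 := by
          calc ∑ p ∈ W, S p j
              = ∑ p ∈ W, ((if src j = some p then (-1:ℝ) else 0)
                + (if tgt j = some p then 1 else 0)) :=
                Finset.sum_congr rfl fun p _ => hS p j
            _ = (∑ p ∈ W, if src j = some p then (-1:ℝ) else 0)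
                + ∑ p ∈ W, (if tgt j = some p then (1:ℝ) else 0) := Finset.sum_add_distrib
            _ = 0 := by
                have e1 : ∑ p ∈ W, (if src j = some p then (-1:ℝ) else 0) = -1 := by
                  simp only [hj, Option.some.injEq]
                  rw [Finset.sum_ite_eq W c (fun _ => (-1 : ℝ))]
                  rw [if_pos hc]
                have e2 : ∑ p ∈ W, (if tgt j = some p then (1:ℝ) else 0) = 1 := by
                  simp only [h1, Option.some.injEq]
                  rw [Finset.sum_ite_eq W m₂ (fun _ => (1 : ℝ))]
                  rw [if_pos h2]
                rw [e1, e2]; ring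
        rw [if_pos hj, hsum, map_zero, map_zero, zero_mul]
      · rw [if_neg hj]
  have hout : ∀ c : Fin M, ∃ j, src j = some c := by
    intro c
    obtain ⟨c', hc', j, hj, _⟩ := notrap {c} ⟨c, Finset.mem_singleton_self c⟩
    rw [Finset.mem_singleton] at hc'
    exact ⟨j, by rw [hj, hc']⟩
  have easy : ∀ m' : Fin M, ¬ Relation.ReflTransGen step mstar m' → A⁻¹ m' mstar = 0 := by
    intro m' hm'
    refine helperInv A hdet {m | Relation.ReflTransGen step mstar m} ?_ mstar m'
      Relation.ReflTransGen.refl hm'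
    intro i c hi hc
    exact hm0 i c (fun h => hi (h ▸ hc))
      (fun j hj hti => hi (Relation.ReflTransGen.tail hc ((hstep c i).mpr ⟨j, hj, hti⟩)))
  have hard : ∀ m' : Fin M, Relation.ReflTransGen step mstar m' → A⁻¹ m' mstar ≠ 0 := by
    intro m' hreach
    obtain ⟨l₁, hchain, hlast, hnodup⟩ := nodupChain hreach
    set l : List (Fin M) := mstar :: l₁ with hl
    have hlen : 0 < l.length := by simp [hl]
    have hlastget : l[l.length - 1]'(by omega) = m' := by
      rw [← List.getLast_eq_getElem (l := l) (List.cons_ne_nil _ _)]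
      exact hlast
    have hm'mem : m' ∈ l := by
      rw [← hlast]
      exact List.getLast_mem _
    have hmstarmem : mstar ∈ l := by rw [hl]; exact List.mem_cons_self
    have hmstar0 : l[0]'hlen = mstar := rfl
    have hgetinj : ∀ (a b : ℕ) (ha : a < l.length) (hb : b < l.length),
        l[a]'ha = l[b]'hb → a = b := by
      intro a b ha hb hab
      exact (hnodup.getElem_inj_iff).mp hab
    have hgeq : ∀ (a b : ℕ) (hab : a = b) (ha : a + 1 < l.length) (hb : b + 1 < l.length),
        l[a+1]'ha = l[b+1]'hb := by
      intro a b hab ha hb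
      subst hab
      rfl
    have hchainE : ∀ n (hn : n + 1 < l.length),
        step (l[n]'(Nat.lt_of_succ_lt hn)) (l[n+1]'hn) := by
      intro n hn
      exact List.isChain_iff_getElem.mp (hchain : List.IsChain step l) n hn
    obtain ⟨j₀, _⟩ := hout mstar
    obtain ⟨g₀, ρ, hg₀⟩ := escapeLemma src tgt j₀ notrap l.toFinsetᶜ
    set Pc : Fin M → Prop := fun c => ∃ n : ℕ, ∃ hn : n + 1 < l.length,
      l[n]'(Nat.lt_of_succ_lt hn) = c with hPcdef
    set g : Fin M → Fin N := fun c =>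
      if h : Pc c then
        Exists.choose ((hstep (l[h.choose]'(Nat.lt_of_succ_lt h.choose_spec.choose))
          (l[h.choose + 1]'(h.choose_spec.choose))).mp
          (hchainE h.choose h.choose_spec.choose))
      else if _h2 : c ∈ l then (hout c).choose
      else g₀ c with hg
    have hK1 : ∀ c, src (g c) = some c := by
      intro c
      simp only [hg]
      by_cases h : Pc c
      · rw [dif_pos h]
        have hspec := Exists.choose_spec ((hstep (l[h.choose]'(Nat.lt_of_succ_lt h.choose_spec.choose))
          (l[h.choose + 1]'(h.choose_spec.choose))).mp
          (hchainE h.choose h.choose_spec.choose))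
        rw [hspec.1, h.choose_spec.choose_spec]
      · rw [dif_neg h]
        by_cases h2 : c ∈ l
        · rw [dif_pos h2]
          exact (hout c).choose_spec
        · rw [dif_neg h2]
          exact (hg₀ c (Finset.mem_compl.mpr (fun hh => h2 (List.mem_toFinset.mp hh)))).1
    have hK2 : ∀ n (hn : n + 1 < l.length),
        tgt (g (l[n]'(Nat.lt_of_succ_lt hn))) = some (l[n+1]'hn) := by
      intro n hn
      have hP : Pc (l[n]'(Nat.lt_of_succ_lt hn)) := ⟨n, hn, rfl⟩
      simp only [hg]
      rw [dif_pos hP]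
      have hspec := Exists.choose_spec ((hstep (l[hP.choose]'(Nat.lt_of_succ_lt hP.choose_spec.choose))
          (l[hP.choose + 1]'(hP.choose_spec.choose))).mp
          (hchainE hP.choose hP.choose_spec.choose))
      rw [hspec.2]
      have hnn : hP.choose = n :=
        hgetinj _ _ _ _ hP.choose_spec.choose_spec
      rw [hgeq _ _ hnn]
    have hK3 : ∀ c, c ∉ l → ∀ m₂, tgt (g c) = some m₂ → m₂ ∉ l → ρ m₂ < ρ c := by
      intro c hc m₂ hm₂ hm₂l
      have hnP : ¬ Pc c := by
        intro h
        exact hc (h.choose_spec.choose_spec ▸ List.getElem_mem _)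
      simp only [hg] at hm₂
      rw [dif_neg hnP, dif_neg hc] at hm₂
      exact (hg₀ c (Finset.mem_compl.mpr (fun hh => hc (List.mem_toFinset.mp hh)))).2 m₂ hm₂
        (Finset.mem_compl.mpr (fun hh => hm₂l (List.mem_toFinset.mp hh)))
    -- evaluation
    set v : Fin N × Fin M → ℝ := fun p => if p.1 = g p.2 then 1 else 0 with hv
    set φ : MvPolynomial (Fin N × Fin M) ℝ →+* ℝ := (MvPolynomial.eval v : _) with hφ
    set Ah : Matrix (Fin M) (Fin M) ℝ := Ap.map φ with hAh
    have hAhent : ∀ rr c, Ah rr c =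
        (if c = rr then (-1:ℝ) else 0) + (if tgt (g c) = some rr then 1 else 0) := by
      intro rr c
      rw [hAh, Matrix.map_apply, hAp, Matrix.of_apply, map_sum]
      have hterm : ∀ j, φ (if src j = some c then
          MvPolynomial.C (S rr j) * MvPolynomial.X (j, c) else 0)
          = if src j = some c then S rr j * v (j, c) else 0 := by
        intro j
        split_ifs with hj
        · rw [map_mul, hφ]
          simp [MvPolynomial.eval_C, MvPolynomial.eval_X]
        · rw [map_zero]
      rw [Finset.sum_congr rfl fun j _ => hterm j, Finset.sum_eq_single (g c)]
      · rw [if_pos (hK1 c)]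
        have hv1 : v (g c, c) = 1 := by rw [hv]; simp
        rw [hv1, mul_one, hS, hK1 c]
        simp only [Option.some.injEq]
      · intro j _ hj
        split_ifs with hjs
        · have hv0 : v (j, c) = 0 := by rw [hv]; simp [hj]
          rw [hv0, mul_zero]
        · rfl
      · intro hmem
        exact absurd (Finset.mem_univ _) hmem
    set Bh : Matrix (Fin M) (Fin M) ℝ := Ah.updateRow mstar (Pi.single m' 1) with hB
    have hdetB : Bh.det ≠ 0 := by
      rw [Ne, ← Matrix.exists_vecMul_eq_zero_iff]
      rintro ⟨y, hy0, hy⟩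
      apply hy0
      set yo : Option (Fin M) → ℝ := fun o => o.elim 0 (fun d => if d = mstar then 0 else y d)
        with hyo
      have key : ∀ c, (if c = m' then y mstar else 0) + (if c = mstar then 0 else -(y c))
          + yo (tgt (g c)) = 0 := by
        intro c
        have h0 : ∑ rr : Fin M, y rr * Bh rr c = 0 := by
          have := congrFun hy c
          simpa [Matrix.vecMul, dotProduct] using this
        have hsummand : ∀ rr : Fin M, y rr * Bh rr c =
            (if rr = mstar then (if c = m' then y mstar else 0) else 0)
            + (if c = rr then (if c = mstar then 0 else -(y c)) else 0)
            + (if tgt (g c) = some rr then (if rr = mstar then 0 else y rr) else 0) := by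
          intro rr
          rw [hB, Matrix.updateRow_apply]
          by_cases h1 : rr = mstar
          · subst h1
            rw [if_pos rfl, if_pos rfl, if_pos rfl, Pi.single_apply]
            have e2 : (if c = rr then (if c = rr then (0:ℝ) else -(y c)) else 0) = 0 := by
              split_ifs with h3
              · rfl
              · rfl
            rw [e2, ite_self]
            split_ifs <;> ring
          · rw [if_neg h1, if_neg h1, if_neg h1, hAhent]
            by_cases h2 : c = rr
            · subst h2
              rw [if_pos rfl, if_pos rfl, if_neg (fun hh : c = mstar => h1 (hh ▸ rfl))]
              split_ifs <;> ring
            · rw [if_neg h2, if_neg h2]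
              split_ifs <;> ring
        rw [Finset.sum_congr rfl fun rr _ => hsummand rr, Finset.sum_add_distrib,
          Finset.sum_add_distrib] at h0
        have s1 : ∑ rr : Fin M, (if rr = mstar then (if c = m' then y mstar else 0) else 0)
            = (if c = m' then y mstar else 0) := by
          rw [Finset.sum_ite_eq' Finset.univ mstar (fun _ => if c = m' then y mstar else 0)]
          exact if_pos (Finset.mem_univ _)
        have s2 : ∑ rr : Fin M, (if c = rr then (if c = mstar then 0 else -(y c)) else 0)
            = (if c = mstar then 0 else -(y c)) := by
          rw [Finset.sum_ite_eq Finset.univ c (fun _ => if c = mstar then 0 else -(y c))]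
          exact if_pos (Finset.mem_univ _)
        have s3 : ∑ rr : Fin M, (if tgt (g c) = some rr then (if rr = mstar then 0 else y rr) else 0)
            = yo (tgt (g c)) := by
          cases htc : tgt (g c) with
          | none => simp [hyo]
          | some d =>
            rw [hyo]
            simp only [Option.elim, Option.some.injEq]
            rw [Finset.sum_ite_eq Finset.univ d (fun rr => if rr = mstar then 0 else y rr)]
            exact if_pos (Finset.mem_univ _)
        rw [s1, s2, s3] at h0
        exact h0
      have p1 : ∀ n (hn : n + 1 < l.length), y (l[n+1]'hn) = 0 := by
        intro n
        induction n with
        | zero =>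
          intro hn
          have hms : mstar ≠ m' := by
            intro hmm
            have heq : l[0]'hlen = l[l.length - 1]'(by omega) := by
              rw [hmstar0, hlastget, hmm]
            have := hgetinj _ _ _ _ heq
            omega
          have hk := key mstar
          rw [if_neg hms, if_pos rfl] at hk
          have htm : tgt (g mstar) = some (l[0+1]'hn) := hK2 0 hn
          rw [htm, hyo] at hk
          simp only [Option.elim] at hk
          have hne1 : l[0+1]'hn ≠ mstar := by
            intro hmm
            have heq : l[0+1]'hn = l[0]'hlen := by rw [hmm, hmstar0]
            have := hgetinj _ _ _ _ heq
            omega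
          rw [if_neg hne1] at hk
          linarith
        | succ k ihk =>
          intro hn
          have hk1 : k + 1 < l.length := by omega
          have hyc := ihk hk1
          have hcm : l[k+1]'hk1 ≠ mstar := by
            intro hmm
            have heq : l[k+1]'hk1 = l[0]'hlen := by rw [hmm, hmstar0]
            have := hgetinj _ _ _ _ heq
            omega
          have hcmp : l[k+1]'hk1 ≠ m' := by
            intro hmm
            have heq : l[k+1]'hk1 = l[l.length - 1]'(by omega) := by rw [hmm, hlastget]
            have := hgetinj _ _ _ _ heq
            omega
          have hk' := key (l[k+1]'hk1)
          rw [if_neg hcmp, if_neg hcm] at hk'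
          have htc : tgt (g (l[k+1]'hk1)) = some (l[k+1+1]'hn) := hK2 (k+1) hn
          rw [htc, hyo] at hk'
          simp only [Option.elim] at hk'
          have hne2 : l[k+1+1]'hn ≠ mstar := by
            intro hmm
            have heq : l[k+1+1]'hn = l[0]'hlen := by rw [hmm, hmstar0]
            have := hgetinj _ _ _ _ heq
            omega
          rw [if_neg hne2, hyc] at hk'
          linarith
      have p1' : ∀ x, x ∈ l → x ≠ mstar → y x = 0 := by
        intro x hx hxm
        obtain ⟨i, hi, hix⟩ := List.mem_iff_getElem.mp hx
        cases i with
        | zero =>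
          exact absurd (by rw [← hix]; exact hmstar0) hxm
        | succ k =>
          rw [← hix]
          exact p1 k hi
      have p2 : ∀ n, ∀ c, c ∉ l → ρ c = n → y c = 0 := by
        intro n
        induction n using Nat.strong_induction_on with
        | _ n ih =>
          intro c hc hrc
          have hcm : c ≠ mstar := fun h => hc (h ▸ hmstarmem)
          have hcm' : c ≠ m' := fun h => hc (h ▸ hm'mem)
          have hk := key c
          rw [if_neg hcm', if_neg hcm] at hk
          have hyotc : yo (tgt (g c)) = 0 := by
            cases htc : tgt (g c) with
            | none => simp [hyo]
            | some d =>
              rw [hyo]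
              simp only [Option.elim]
              by_cases hdm : d = mstar
              · rw [if_pos hdm]
              · rw [if_neg hdm]
                by_cases hdl : d ∈ l
                · exact p1' d hdl hdm
                · have hlt := hK3 c hc d htc hdl
                  exact ih (ρ d) (hrc ▸ hlt) d hdl rfl
          rw [hyotc] at hk
          linarith
      have hyz : ∀ d : Fin M, d ≠ mstar → y d = 0 := by
        intro d hd
        by_cases hdl : d ∈ l
        · exact p1' d hdl hd
        · exact p2 (ρ d) d hdl rfl
      have hyoz : ∀ o : Option (Fin M), yo o = 0 := by
        intro o
        cases o with
        | none => simp [hyo]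
        | some d =>
          rw [hyo]
          simp only [Option.elim]
          by_cases hdm : d = mstar
          · rw [if_pos hdm]
          · rw [if_neg hdm]
            exact hyz d hdm
      have pm : y mstar = 0 := by
        by_cases hmm : mstar = m'
        · have hk := key mstar
          rw [if_pos hmm, if_pos rfl, hyoz] at hk
          linarith
        · have hk := key m'
          rw [if_pos rfl, if_neg (fun h => hmm h.symm), hyoz,
            hyz m' (fun h => hmm h.symm)] at hk
          linarith
      funext d
      show y d = 0
      by_cases hdm : d = mstar
      · rw [hdm]; exact pm
      · exact hyz d hdm
    have hadjAh : (Matrix.adjugate Ah) m' mstar ≠ 0 := by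
      rw [Matrix.adjugate_apply, ← hB]
      exact hdetB
    have hadjAp : (Matrix.adjugate Ap) m' mstar ≠ 0 := by
      intro h0
      apply hadjAh
      have hmapadj : (Matrix.adjugate Ap).map φ = Matrix.adjugate Ah := by
        have h := RingHom.map_adjugate φ Ap
        simpa [RingHom.mapMatrix_apply, hAh] using h
      rw [← hmapadj, Matrix.map_apply, h0, map_zero]
    have hadjA : (Matrix.adjugate A) m' mstar ≠ 0 := by
      intro h0
      apply hadjAp
      apply halg_inj
      rw [map_zero]
      have hmapadj : (Matrix.adjugate Ap).map
          (algebraMap (MvPolynomial (Fin N × Fin M) ℝ) (RatFunField (Fin N × Fin M)))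
          = Matrix.adjugate A := by
        have h := RingHom.map_adjugate
          (algebraMap (MvPolynomial (Fin N × Fin M) ℝ) (RatFunField (Fin N × Fin M))) Ap
        rw [hApA]
        simpa [RingHom.mapMatrix_apply] using h
      calc algebraMap (MvPolynomial (Fin N × Fin M) ℝ) (RatFunField (Fin N × Fin M))
            (Matrix.adjugate Ap m' mstar)
          = ((Matrix.adjugate Ap).map (algebraMap (MvPolynomial (Fin N × Fin M) ℝ)
              (RatFunField (Fin N × Fin M)))) m' mstar := rfl
        _ = Matrix.adjugate A m' mstar := by rw [hmapadj]
        _ = 0 := h0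
    intro hz
    apply hadjA
    rw [Matrix.inv_def, Matrix.smul_apply, smul_eq_mul] at hz
    rcases mul_eq_zero.mp hz with h | h
    · rw [Ring.inverse_eq_inv] at h
      exact absurd h (inv_ne_zero hdet)
    · exact h
  have part1 : ∀ m' : Fin M, -(A⁻¹ m' mstar) ≠ 0 ↔ Relation.ReflTransGen step mstar m' := by
    intro m'
    rw [neg_ne_zero]
    constructor
    · intro h
      by_contra hc
      exact h (easy m' hc)
    · exact hard m'
  refine ⟨part1, ?_⟩
  intro j'
  have hRA : (R * A⁻¹) j' mstar = ∑ m : Fin M, R j' m * A⁻¹ m mstar := Matrix.mul_apply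
  cases hsrc : src j' with
  | none =>
    have h0 : (R * A⁻¹) j' mstar = 0 := by
      rw [hRA]
      refine Finset.sum_eq_zero fun m _ => ?_
      rw [hR, hsrc, if_neg (by simp), zero_mul]
    rw [h0, neg_zero]
    constructor
    · intro h; exact absurd rfl h
    · rintro ⟨m, _, hm⟩
      exact absurd hm (by simp)
  | some m₀ =>
    have h1 : (R * A⁻¹) j' mstar = r (j', m₀) * A⁻¹ m₀ mstar := by
      rw [hRA, Finset.sum_eq_single m₀]
      · rw [hR, hsrc, if_pos rfl]
      · intro m _ hm
        rw [hR, hsrc, if_neg (fun hh => hm (Option.some_injective _ hh).symm), zero_mul]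
      · intro h
        exact absurd (Finset.mem_univ m₀) h
    have hr0 : r (j', m₀) ≠ 0 := by
      intro h0
      rw [hr] at h0
      exact MvPolynomial.X_ne_zero _ ((map_eq_zero_iff _ halg_inj).mp h0)
    rw [h1, neg_ne_zero]
    constructor
    · intro h
      have h2 : A⁻¹ m₀ mstar ≠ 0 := fun hz => h (by rw [hz, mul_zero])
      exact ⟨m₀, (part1 m₀).mp (by rwa [neg_ne_zero]), rfl⟩
    · rintro ⟨m, hmreach, hmsrc⟩
      have hm : m₀ = m := Option.some_injective _ hmsrc
      subst hm
      exact mul_ne_zero hr0 (hard m₀ hmreach)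
end

section
/- In a monomolecular reaction network, metabolite influence is transitive: if m*, p₁, p₂ are elements with m* a metabolite, and m* ⇝ p₁ and p₁ ⇝ p₂, then m* ⇝ p₂. -/
open scoped Classical Matrix

namespace Stmt18Aux

lemma inv_entry_zero_of_invariant {K : Type*} [Field K] {M : ℕ}
    (A : Matrix (Fin M) (Fin M) K) (hdet : A.det ≠ 0)
    (U : Set (Fin M)) (hU : ∀ k ∈ U, ∀ i, i ∉ U → A i k = 0)
    {m m' : Fin M} (hm : m ∈ U) (hm' : m' ∉ U) : A⁻¹ m' m = 0 := by
  classical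
  have hunit : IsUnit A.det := isUnit_iff_ne_zero.mpr hdet
  set V : Submodule K (Fin M → K) := Submodule.pi (Uᶜ) (fun _ => ⊥) with hV
  have memV : ∀ v : Fin M → K, v ∈ V ↔ ∀ i, i ∉ U → v i = 0 := by
    intro v
    simp only [hV, Submodule.mem_pi, Set.mem_compl_iff, Submodule.mem_bot]
  set f := A.mulVecLin with hf
  have hinj : Function.Injective f := by
    intro v w h
    have h2 : A⁻¹ *ᵥ (A *ᵥ v) = A⁻¹ *ᵥ (A *ᵥ w) := by
      simp only [hf, Matrix.mulVecLin_apply] at h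
      rw [h]
    simpa [Matrix.mulVec_mulVec, Matrix.nonsing_inv_mul A hunit] using h2
  have hle : Submodule.map f V ≤ V := by
    rintro x ⟨v, hv, rfl⟩
    rw [SetLike.mem_coe, memV] at hv
    rw [memV]
    intro i hi
    simp only [hf, Matrix.mulVecLin_apply, Matrix.mulVec, dotProduct]
    refine Finset.sum_eq_zero fun k _ => ?_
    by_cases hk : k ∈ U
    · rw [hU k hk i hi, zero_mul]
    · rw [hv k hk, mul_zero]
  have heq : Submodule.map f V = V := by
    refine Submodule.eq_of_le_of_finrank_le hle ?_
    exact le_of_eq (LinearEquiv.finrank_eq (Submodule.equivMapOfInjective f hinj V))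
  have hem : (Pi.single m 1 : Fin M → K) ∈ Submodule.map f V := by
    rw [heq, memV]
    intro i hi
    have : i ≠ m := fun h => hi (h ▸ hm)
    simp [Pi.single_apply, this]
  obtain ⟨w, hw, hwe⟩ := hem
  have hBw : A⁻¹ *ᵥ (Pi.single m 1) = w := by
    rw [← hwe]
    simp only [hf, Matrix.mulVecLin_apply]
    rw [Matrix.mulVec_mulVec, Matrix.nonsing_inv_mul A hunit, Matrix.one_mulVec]
  have : (A⁻¹ *ᵥ (Pi.single m 1)) m' = A⁻¹ m' m := by
    simp [Matrix.mulVec_single]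
  rw [hBw] at this
  rw [← this, (memV w).mp hw m' hm']


variable {M : ℕ}

/-- one step of a partial function on `Fin M`. -/
def stp (τ : Fin M → Option (Fin M)) (o : Option (Fin M)) : Option (Fin M) := o.bind τ

lemma stp_none (τ : Fin M → Option (Fin M)) (p : ℕ) : (stp τ)^[p] none = none := by
  induction p with
  | zero => rfl
  | succ p ih => rw [Function.iterate_succ_apply, stp]; simpa using ih

/-- no periodic point -/
def NoCycle (τ : Fin M → Option (Fin M)) : Prop :=
  ∀ x : Fin M, ∀ p : ℕ, 0 < p → (stp τ)^[p] (some x) ≠ some x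

/-- 0/1 matrix of a partial function: row k has a 1 at τ k. -/
noncomputable def Tmat (τ : Fin M → Option (Fin M)) : Matrix (Fin M) (Fin M) ℝ :=
  Matrix.of fun k i => if τ k = some i then 1 else 0

lemma Tmat_pow (τ : Fin M → Option (Fin M)) (p : ℕ) (k i : Fin M) :
    (Tmat τ ^ p) k i = if (stp τ)^[p] (some k) = some i then 1 else 0 := by
  induction p generalizing i with
  | zero =>
    simp only [pow_zero, Matrix.one_apply, Function.iterate_zero_apply]
    by_cases h : k = i <;> simp [h, eq_comm]
  | succ p ih =>
    rw [pow_succ, Matrix.mul_apply, Function.iterate_succ_apply']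
    rcases ho : (stp τ)^[p] (some k) with _ | c
    · have h0 : stp τ none = none := rfl
      rw [h0, if_neg (by simp)]
      refine Finset.sum_eq_zero fun l _ => ?_
      rw [ih l, ho]
      simp
    · rw [Finset.sum_eq_single c]
      · rw [ih c, ho, if_pos rfl, one_mul]
        rfl
      · intro l _ hl
        rw [ih l, ho]
        simp [Option.some_inj, (Ne.symm hl : ¬ c = l)]
      · simp

lemma iter_mono_none (τ : Fin M → Option (Fin M)) {a b : ℕ} (hab : a ≤ b)
    (o : Option (Fin M)) (h : (stp τ)^[a] o = none) : (stp τ)^[b] o = none := by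
  obtain ⟨c, rfl⟩ := Nat.exists_eq_add_of_le hab
  rw [Nat.add_comm, Function.iterate_add_apply, h, stp_none]

lemma nocycle_iterate_none (τ : Fin M → Option (Fin M)) (hnc : NoCycle τ) (x : Fin M) :
    (stp τ)^[M] (some x) = none := by
  by_contra h
  -- all iterates up to M are `some`
  have hsome : ∀ q : ℕ, q ≤ M → ∃ y, (stp τ)^[q] (some x) = some y := by
    intro q hq
    rcases ho : (stp τ)^[q] (some x) with _ | y
    · exact absurd (iter_mono_none τ hq _ ho) h
    · exact ⟨y, rfl⟩
  have : ∀ q : Fin (M+1), ∃ y, (stp τ)^[(q : ℕ)] (some x) = some y :=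
    fun q => hsome q (Nat.lt_succ_iff.mp q.isLt)
  choose g hg using this
  obtain ⟨a, b, hne, hab⟩ := Fintype.exists_ne_map_eq_of_card_lt g (by simp)
  rcases Ne.lt_or_gt hne with hlt | hlt
  case _ =>
    have : (stp τ)^[(b : ℕ) - (a : ℕ)] (some (g a)) = some (g a) := by
      have := hg b
      rw [show ((b : ℕ)) = ((b : ℕ) - (a : ℕ)) + (a : ℕ) by omega,
        Function.iterate_add_apply, hg a] at this
      rw [this, hab]
    exact hnc (g a) _ (by omega) this
  case _ =>
    have : (stp τ)^[(a : ℕ) - (b : ℕ)] (some (g b)) = some (g b) := by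
      have := hg a
      rw [show ((a : ℕ)) = ((a : ℕ) - (b : ℕ)) + (b : ℕ) by omega,
        Function.iterate_add_apply, hg b] at this
      rw [this, ← hab]
    exact hnc (g b) _ (by omega) this

lemma nocycle_det_ne (τ : Fin M → Option (Fin M)) (hnc : NoCycle τ) :
    (1 - Tmat τ).det ≠ 0 := by
  have hnil : IsNilpotent (Tmat τ) := by
    refine ⟨M + 1, ?_⟩
    ext k i
    rw [Tmat_pow]
    have : (stp τ)^[M+1] (some k) = none :=
      iter_mono_none τ (Nat.le_succ M) _ (nocycle_iterate_none τ hnc k)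
    simp [this]
  have hu : IsUnit (1 - Tmat τ) := hnil.isUnit_one_sub
  have := hu.map (Matrix.detMonoidHom (n := Fin M) (R := ℝ))
  simpa using this.ne_zero

lemma cycle_det_zero (τ : Fin M → Option (Fin M)) (x : Fin M) (p : ℕ) (hp : 0 < p)
    (hcyc : (stp τ)^[p] (some x) = some x) : (1 - Tmat τ).det = 0 := by
  by_contra hdet
  -- the indicator vector of the orbit is a fixed point of right-multiplication by Tmat
  set v : Fin M → ℝ := fun i => ∑ q ∈ Finset.range p,
    (if (stp τ)^[q] (some x) = some i then (1 : ℝ) else 0) with hv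
  have hvT : v ᵥ* (Tmat τ) = v := by
    funext i
    rw [Matrix.vecMul, hv]
    simp only [dotProduct]
    rw [Finset.sum_congr rfl fun k _ => Finset.sum_mul (Finset.range p) _ (Tmat τ k i)]
    rw [Finset.sum_comm]
    have hterm : ∀ q, ∑ k : Fin M,
        (if (stp τ)^[q] (some x) = some k then (1:ℝ) else 0) * Tmat τ k i
        = (if (stp τ)^[q+1] (some x) = some i then (1:ℝ) else 0) := by
      intro q
      rcases ho : (stp τ)^[q] (some x) with _ | c
      · rw [Function.iterate_succ_apply', ho]
        have h0 : stp τ none = none := rfl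
        rw [h0, if_neg (by simp)]
        exact Finset.sum_eq_zero fun l _ => by simp
      · rw [Function.iterate_succ_apply', ho]
        rw [Finset.sum_eq_single c]
        · rw [if_pos rfl, one_mul]
          rfl
        · intro l _ hl
          rw [if_neg (by simp [(Ne.symm hl : ¬ c = l)]), zero_mul]
        · simp
    rw [Finset.sum_congr rfl fun q _ => hterm q]
    -- shift the sum using periodicity
    set f : ℕ → ℝ := fun q => if (stp τ)^[q] (some x) = some i then (1:ℝ) else 0 with hfdef
    have hshift := Finset.sum_range_succ' f p
    have h2 := Finset.sum_range_succ f p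
    have hfp : f p = f 0 := by rw [hfdef]; simp only [Function.iterate_zero_apply, hcyc]; congr
    show ∑ q ∈ Finset.range p, f (q+1) = ∑ q ∈ Finset.range p, f q
    have : ∑ q ∈ Finset.range p, f (q+1) + f 0 = ∑ q ∈ Finset.range p, f q + f p := by
      rw [← hshift, ← h2]
    rw [hfp] at this
    linarith
  have hv0 : v ᵥ* (1 - Tmat τ) = 0 := by
    rw [Matrix.vecMul_sub, Matrix.vecMul_one, hvT, sub_self]
  have hvz : v = 0 := by
    have hinv : (1 - Tmat τ) * (1 - Tmat τ)⁻¹ = 1 :=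
      Matrix.mul_nonsing_inv _ (isUnit_iff_ne_zero.mpr hdet)
    calc v = v ᵥ* ((1 - Tmat τ) * (1 - Tmat τ)⁻¹) := by rw [hinv, Matrix.vecMul_one]
    _ = (v ᵥ* (1 - Tmat τ)) ᵥ* (1 - Tmat τ)⁻¹ := by rw [Matrix.vecMul_vecMul]
    _ = 0 := by rw [hv0, Matrix.zero_vecMul]
  have : v x ≥ 1 := by
    rw [hv]
    have h1 : (if (stp τ)^[0] (some x) = some x then (1:ℝ) else 0) = 1 := by simp
    calc (1:ℝ) = ∑ q ∈ ({0} : Finset ℕ), (if (stp τ)^[q] (some x) = some x then (1:ℝ) else 0) := by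
          rw [Finset.sum_singleton, h1]
    _ ≤ _ := Finset.sum_le_sum_of_subset_of_nonneg (by simp [hp])
        (fun q _ _ => by positivity)
  rw [hvz] at this
  simp at this
  linarith


lemma nocycle_restrict (τ τ' : Fin M → Option (Fin M))
    (h : ∀ b c, τ' b = some c → τ b = some c) (hnc : NoCycle τ) : NoCycle τ' := by
  have key : ∀ (p : ℕ) (o : Option (Fin M)) (y : Fin M),
      (stp τ')^[p] o = some y → (stp τ)^[p] o = some y := by
    intro p
    induction p with
    | zero => intro o y h'; exact h'
    | succ p ih =>
      intro o y h'
      rw [Function.iterate_succ_apply] at h' ⊢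
      rcases ho : stp τ' o with _ | c
      · rw [ho, stp_none] at h'
        exact absurd h' (by simp)
      · rcases o with _ | b
        · exact absurd ho (by simp [stp])
        · have hb : τ' b = some c := ho
          have h2 : stp τ (some b) = some c := h b c hb
          rw [h2]
          rw [ho] at h'
          exact ih _ _ h'
  intro x p hp hx
  exact hnc x p hp (key p _ _ hx)




variable {M N : ℕ}

noncomputable def Sp (src tgt : Fin N → Option (Fin M)) (i : Fin M) (j : Fin N) : ℝ :=
  (if src j = some i then (-1:ℝ) else 0) + (if tgt j = some i then 1 else 0)

noncomputable def Pmat (src tgt : Fin N → Option (Fin M)) :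
    Matrix (Fin M) (Fin M) (MvPolynomial (Fin N × Fin M) ℝ) :=
  Matrix.of fun i k => ∑ j : Fin N,
    if src j = some k then MvPolynomial.C (Sp src tgt i j) * MvPolynomial.X (j, k) else 0

lemma prod_X_monomial (s : Finset (Fin M)) (f : Fin M → Fin N × Fin M) :
    (∏ k ∈ s, (MvPolynomial.X (f k) : MvPolynomial (Fin N × Fin M) ℝ))
      = MvPolynomial.monomial (∑ k ∈ s, Finsupp.single (f k) 1) 1 := by
  classical
  induction s using Finset.induction_on with
  | empty => rw [Finset.prod_empty, Finset.sum_empty, MvPolynomial.monomial_zero', map_one]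
  | insert _ _ h ih =>
    rw [Finset.prod_insert h, Finset.sum_insert h, ih,
      show (MvPolynomial.X (f _) : MvPolynomial (Fin N × Fin M) ℝ)
        = MvPolynomial.monomial (Finsupp.single (f _) 1) 1 from rfl,
      MvPolynomial.monomial_mul, one_mul]

lemma expfun_apply (s : Finset (Fin M)) (f : Fin M → Fin N) (j : Fin N) (k : Fin M) :
    ((∑ k' ∈ s, Finsupp.single ((f k', k') : Fin N × Fin M) 1) : (Fin N × Fin M) →₀ ℕ) (j, k)
      = if k ∈ s ∧ f k = j then 1 else 0 := by
  classical
  rw [Finset.sum_apply']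
  have hterm : ∀ k' ∈ s, (Finsupp.single ((f k', k') : Fin N × Fin M) 1) (j, k)
      = if k' = k then (if f k = j then 1 else 0) else 0 := by
    intro k' _
    rw [Finsupp.single_apply]
    by_cases h : k' = k
    · subst h
      by_cases h2 : f k' = j <;> simp [Prod.ext_iff, h2]
    · simp [Prod.ext_iff, h]
  rw [Finset.sum_congr rfl hterm, Finset.sum_ite_eq' s k]
  by_cases hk : k ∈ s <;> by_cases h2 : f k = j <;> simp [hk, h2]


lemma Sp_def (src tgt : Fin N → Option (Fin M)) (i : Fin M) (j : Fin N) :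
    Sp src tgt i j
      = (if src j = some i then (-1:ℝ) else 0) + (if tgt j = some i then 1 else 0) := rfl

lemma exists_good (src tgt : Fin N → Option (Fin M))
    (hd : (Pmat src tgt).det ≠ 0) :
    ∃ F : Fin M → Fin N, (∀ k, src (F k) = some k) ∧
      NoCycle (fun k => tgt (F k)) := by
  classical
  set Q := (Pmat src tgt)ᵀ with hQ
  have hQd : Q.det ≠ 0 := by rwa [hQ, Matrix.det_transpose]
  set Fsrc : Fin M → Finset (Fin N) :=
    fun k => Finset.univ.filter (fun j => src j = some k) with hFs
  set gv : Fin N → (Fin M → MvPolynomial (Fin N × Fin M) ℝ) :=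
    fun j => fun i => MvPolynomial.C (Sp src tgt i j) with hgv
  have hrow : (fun k => Q k) = fun k => ∑ j ∈ Fsrc k,
      (MvPolynomial.X ((j, k) : Fin N × Fin M) : MvPolynomial (Fin N × Fin M) ℝ) • gv j := by
    funext k
    funext i
    show (Pmat src tgt) i k = _
    rw [Finset.sum_apply]
    simp only [Pi.smul_apply, hgv, smul_eq_mul]
    rw [Pmat]
    simp only [Matrix.of_apply]
    rw [← Finset.sum_filter]
    exact Finset.sum_congr rfl fun j _ => mul_comm _ _
  set f := (Matrix.detRowAlternating (R := MvPolynomial (Fin N × Fin M) ℝ)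
    (n := Fin M)).toMultilinearMap with hf
  have h0 : Q.det = f (fun k => Q k) := rfl
  have h1 := f.map_sum_finset
    (g := fun k j => (MvPolynomial.X ((j, k) : Fin N × Fin M) :
      MvPolynomial (Fin N × Fin M) ℝ) • gv j) (A := Fsrc)
  have hdet1 : Q.det = ∑ r ∈ Fintype.piFinset Fsrc,
      (∏ k, (MvPolynomial.X ((r k, k) : Fin N × Fin M) : MvPolynomial (Fin N × Fin M) ℝ))
        * MvPolynomial.C ((Matrix.of fun k i => Sp src tgt i (r k)).det) := by
    rw [h0, hrow, h1]
    refine Finset.sum_congr rfl fun r _ => ?_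
    rw [f.map_smul_univ (fun k => (MvPolynomial.X ((r k, k) : Fin N × Fin M) :
      MvPolynomial (Fin N × Fin M) ℝ)) (fun k => gv (r k))]
    rw [smul_eq_mul]
    congr 1
    have : f (fun k => gv (r k))
        = ((MvPolynomial.C : ℝ →+* MvPolynomial (Fin N × Fin M) ℝ).mapMatrix
            (Matrix.of fun k i => Sp src tgt i (r k))).det := rfl
    rw [this, ← RingHom.map_det]
  obtain ⟨r, hrmem, hrne⟩ := Finset.exists_ne_zero_of_sum_ne_zero (hdet1 ▸ hQd)
  have hsrc : ∀ k, src (r k) = some k := by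
    intro k
    have := (Fintype.mem_piFinset.mp hrmem) k
    rw [hFs] at this
    exact (Finset.mem_filter.mp this).2
  have hVne : (Matrix.of fun k i => Sp src tgt i (r k)).det ≠ 0 := by
    intro h
    rw [h] at hrne
    simp at hrne
  have hV : (Matrix.of fun k i => Sp src tgt i (r k))
      = Tmat (fun k => tgt (r k)) - 1 := by
    ext k i
    rw [Matrix.of_apply, Sp_def, hsrc k]
    simp only [Matrix.sub_apply, Matrix.one_apply, Tmat, Matrix.of_apply, Option.some_inj]
    by_cases h1 : tgt (r k) = some i <;> by_cases h2 : k = i <;> (try simp [h1, h2]) <;> ring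
  have h1T : (1 - Tmat (fun k => tgt (r k))).det ≠ 0 := by
    intro h
    rw [hV, (neg_sub (1 : Matrix (Fin M) (Fin M) ℝ) (Tmat fun k => tgt (r k))).symm,
      Matrix.det_neg, h, mul_zero] at hVne
    exact hVne rfl
  refine ⟨r, hsrc, fun x p hp hx => h1T (cycle_det_zero _ x p hp hx)⟩


lemma adj_diag_ne (src tgt : Fin N → Option (Fin M)) (F : Fin M → Fin N)
    (hF : ∀ k, src (F k) = some k)
    (hnc : NoCycle (fun k => tgt (F k))) (m : Fin M) :
    (Pmat src tgt).adjugate m m ≠ 0 := by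
  classical
  set Q := (Pmat src tgt)ᵀ with hQ
  have hadj : (Pmat src tgt).adjugate m m = (Q.updateRow m (Pi.single m 1)).det := by
    have h1 : (Pmat src tgt).adjugate m m = ((Pmat src tgt).adjugate)ᵀ m m := rfl
    rw [h1, Matrix.adjugate_transpose, ← hQ, Matrix.adjugate_apply]
  set G : Fin M → Finset (Fin N) :=
    fun k => if k = m then {F m} else Finset.univ.filter (fun j => src j = some k) with hG
  set w : (Fin M → Fin N) → Matrix (Fin M) (Fin M) ℝ :=
    fun r => Matrix.of fun k i =>
      if k = m then (if i = m then (1:ℝ) else 0) else Sp src tgt i (r k) with hw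
  set gfun : Fin M → Fin N → (Fin M → MvPolynomial (Fin N × Fin M) ℝ) := fun k j =>
    if k = m then (fun i => MvPolynomial.C (if i = m then (1:ℝ) else 0))
    else (MvPolynomial.X ((j,k) : Fin N × Fin M) : MvPolynomial (Fin N × Fin M) ℝ)
      • (fun i => (MvPolynomial.C (Sp src tgt i j) : MvPolynomial (Fin N × Fin M) ℝ))
    with hg
  have hrow : (fun k => (Q.updateRow m (Pi.single m 1)) k) = fun k => ∑ j ∈ G k, gfun k j := by
    funext k
    by_cases hk : k = m
    · rw [hk, Matrix.updateRow_self, hG, hg]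
      simp only [if_pos rfl, Finset.sum_singleton]
      funext i
      by_cases hi : i = m <;> simp [Pi.single_apply, hi]
    · rw [Matrix.updateRow_ne hk]
      funext i
      rw [Finset.sum_apply]
      simp only [hg, if_neg hk, Pi.smul_apply, smul_eq_mul, hG]
      show (Pmat src tgt) i k = _
      rw [Pmat]
      simp only [Matrix.of_apply]
      rw [← Finset.sum_filter]
      exact Finset.sum_congr rfl fun j _ => mul_comm _ _
  set f := (Matrix.detRowAlternating (R := MvPolynomial (Fin N × Fin M) ℝ)
    (n := Fin M)).toMultilinearMap with hf
  have h0 : (Q.updateRow m (Pi.single m 1)).det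
      = f (fun k => (Q.updateRow m (Pi.single m 1)) k) := rfl
  have h1 := f.map_sum_finset (g := gfun) (A := G)
  have hdet1 : (Q.updateRow m (Pi.single m 1)).det
      = ∑ r ∈ Fintype.piFinset G,
        MvPolynomial.monomial
          (∑ k ∈ Finset.univ.erase m, Finsupp.single ((r k, k) : Fin N × Fin M) 1)
          ((w r).det) := by
    rw [h0, hrow, h1]
    refine Finset.sum_congr rfl fun r _ => ?_
    have hsplit : (fun k => gfun k (r k)) = fun k =>
        (if k = m then (1 : MvPolynomial (Fin N × Fin M) ℝ)
          else MvPolynomial.X ((r k, k) : Fin N × Fin M))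
          • (fun i => MvPolynomial.C ((w r) k i)) := by
      funext k
      by_cases hk : k = m
      · simp only [hg, hw]
        rw [if_pos hk, if_pos hk, one_smul]
        funext i
        rw [Matrix.of_apply, if_pos hk]
      · simp only [hg, hw]
        rw [if_neg hk, if_neg hk]
        congr 1
        funext i
        rw [Matrix.of_apply, if_neg hk]
    rw [hsplit, f.map_smul_univ]
    have hfC : f (fun k => (fun i => MvPolynomial.C ((w r) k i)))
        = ((MvPolynomial.C : ℝ →+* MvPolynomial (Fin N × Fin M) ℝ).mapMatrix (w r)).det := rfl
    rw [hfC, ← RingHom.map_det]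
    have hprod : (∏ k : Fin M, (if k = m then (1 : MvPolynomial (Fin N × Fin M) ℝ)
        else MvPolynomial.X ((r k, k) : Fin N × Fin M)))
        = MvPolynomial.monomial
          (∑ k ∈ Finset.univ.erase m, Finsupp.single ((r k, k) : Fin N × Fin M) 1) 1 := by
      rw [← Finset.prod_erase (a := m) (f := fun k => if k = m then (1 : MvPolynomial (Fin N × Fin M) ℝ)
        else MvPolynomial.X ((r k, k) : Fin N × Fin M)) Finset.univ (by simp)]
      rw [← prod_X_monomial (Finset.univ.erase m) (fun k => (r k, k))]
      refine Finset.prod_congr rfl fun k hk => ?_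
      rw [if_neg (Finset.mem_erase.mp hk).1]
    rw [hprod, smul_eq_mul, mul_comm, MvPolynomial.C_mul_monomial, mul_one]
  set e0 : (Fin N × Fin M) →₀ ℕ :=
    ∑ k ∈ Finset.univ.erase m, Finsupp.single ((F k, k) : Fin N × Fin M) 1 with he0
  have hFmem : F ∈ Fintype.piFinset G := by
    rw [Fintype.mem_piFinset]
    intro k
    simp only [hG]
    by_cases hk : k = m
    · rw [if_pos hk, hk]; exact Finset.mem_singleton_self _
    · rw [if_neg hk, Finset.mem_filter]
      exact ⟨Finset.mem_univ _, hF k⟩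
  have hcoeff : MvPolynomial.coeff e0 ((Q.updateRow m (Pi.single m 1)).det) = (w F).det := by
    rw [hdet1, MvPolynomial.coeff_sum]
    rw [Finset.sum_eq_single_of_mem F hFmem]
    · rw [MvPolynomial.coeff_monomial, if_pos rfl]
    · intro r hr hne
      rw [MvPolynomial.coeff_monomial, if_neg]
      intro heq
      apply hne
      funext k
      by_cases hk : k = m
      · have h2 := (Fintype.mem_piFinset.mp hr) k
        simp only [hG] at h2
        rw [if_pos hk, Finset.mem_singleton] at h2
        rw [h2, hk]
      · have h2 := congrArg (fun (u : (Fin N × Fin M) →₀ ℕ) => u (r k, k)) heq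
        simp only [he0] at h2
        rw [expfun_apply, expfun_apply] at h2
        have hkm : k ∈ Finset.univ.erase m := Finset.mem_erase.mpr ⟨hk, Finset.mem_univ _⟩
        rw [if_pos ⟨hkm, rfl⟩] at h2
        by_cases hFk : F k = r k
        · exact hFk.symm
        · rw [if_neg (fun hc => hFk hc.2)] at h2
          exact absurd h2 one_ne_zero
  have hwF : (w F).det ≠ 0 := by
    set τh : Fin M → Option (Fin M) := fun k => if k = m then none else tgt (F k) with hτ
    have hnch : NoCycle τh := by
      refine nocycle_restrict (fun k => tgt (F k)) τh (fun b c hbc => ?_) hnc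
      simp only [hτ] at hbc
      by_cases hb : b = m
      · rw [if_pos hb] at hbc; exact absurd hbc (by simp)
      · rwa [if_neg hb] at hbc
    have hdiag : (1 - Tmat τh)
        = Matrix.diagonal (fun k => if k = m then (1:ℝ) else -1) * w F := by
      ext k i
      rw [Matrix.diagonal_mul]
      by_cases hk : k = m
      · have hτk : τh k = none := by simp only [hτ]; rw [if_pos hk]
        have hwk : w F k i = (if i = m then (1:ℝ) else 0) := by
          simp only [hw, Matrix.of_apply]; rw [if_pos hk]
        have hTk : Tmat τh k i = 0 := by
          simp only [Tmat, Matrix.of_apply, hτk]; simp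
        rw [Matrix.sub_apply, Matrix.one_apply, hwk, if_pos hk, hTk, one_mul]
        by_cases hi : i = m
        · rw [if_pos hi, if_pos (hk.trans hi.symm)]; norm_num
        · rw [if_neg hi, if_neg (fun hc : k = i => hi (hc.symm.trans hk))]; norm_num
      · have hτk : τh k = tgt (F k) := by simp only [hτ]; rw [if_neg hk]
        have hwk : w F k i
            = (if (some k : Option (Fin M)) = some i then (-1:ℝ) else 0)
              + (if tgt (F k) = some i then 1 else 0) := by
          simp only [hw, Matrix.of_apply]
          rw [if_neg hk, Sp_def, hF k]
        have hTk : Tmat τh k i = if tgt (F k) = some i then (1:ℝ) else 0 := by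
          simp only [Tmat, Matrix.of_apply, hτk]
        rw [Matrix.sub_apply, Matrix.one_apply, hwk, hTk, if_neg hk]
        simp only [Option.some.injEq]
        by_cases hi : k = i <;> by_cases ht : tgt (F k) = some i <;>
          simp [hi, ht] <;> ring
    have h3 : (1 - Tmat τh).det
        = (Matrix.diagonal (fun k => if k = m then (1:ℝ) else -1)).det * (w F).det := by
      rw [hdiag, Matrix.det_mul]
    have h4 := nocycle_det_ne τh hnch
    intro h5
    rw [h3, h5, mul_zero] at h4
    exact h4 rfl
  intro hzero
  rw [hadj] at hzero
  rw [hzero] at hcoeff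
  simp only [MvPolynomial.coeff_zero] at hcoeff
  exact hwF hcoeff.symm


lemma inv_entry_zero_iff {K R' : Type*} [Field K] [CommRing R']
    (ψ : R' →+* K) (hψ : Function.Injective ψ) (P : Matrix (Fin M) (Fin M) R')
    (hd : (ψ.mapMatrix P).det ≠ 0) (i k : Fin M) :
    ((ψ.mapMatrix P)⁻¹ i k = 0) ↔ P.adjugate i k = 0 := by
  rw [Matrix.inv_def, ← RingHom.map_adjugate]
  simp only [Matrix.smul_apply, RingHom.mapMatrix_apply, Matrix.map_apply, smul_eq_mul]
  rw [mul_eq_zero]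
  have hinv : Ring.inverse (ψ.mapMatrix P).det ≠ 0 := by
    rw [Ring.inverse_eq_inv]
    exact inv_ne_zero hd
  constructor
  · rintro (h | h)
    · exact absurd h hinv
    · exact hψ (h.trans (map_zero ψ).symm)
  · intro h
    right
    rw [h, map_zero]

noncomputable def shiftEquiv {σ : Type} (q0 p0 : σ) (h : p0 ≠ q0) :
    MvPolynomial σ ℝ ≃ₐ[ℝ] MvPolynomial σ ℝ := by
  classical
  exact AlgEquiv.ofAlgHom
    (MvPolynomial.aeval (fun q => if q = q0
      then MvPolynomial.X q0 + MvPolynomial.X p0 else MvPolynomial.X q))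
    (MvPolynomial.aeval (fun q => if q = q0
      then MvPolynomial.X q0 - MvPolynomial.X p0 else MvPolynomial.X q))
    (by
      apply MvPolynomial.algHom_ext
      intro q
      by_cases hq : q = q0 <;>
        simp [hq, h])
    (by
      apply MvPolynomial.algHom_ext
      intro q
      by_cases hq : q = q0 <;>
        simp [hq, h])

lemma shiftEquiv_X {σ : Type} (q0 p0 : σ) (h : p0 ≠ q0) (q : σ) [DecidableEq σ] :
    shiftEquiv q0 p0 h (MvPolynomial.X q)
      = if q = q0 then MvPolynomial.X q0 + MvPolynomial.X p0 else MvPolynomial.X q := by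
  classical
  show MvPolynomial.aeval _ (MvPolynomial.X q) = _
  rw [MvPolynomial.aeval_X]
  congr

lemma shiftEquiv_C {σ : Type} (q0 p0 : σ) (h : p0 ≠ q0) (a : ℝ) :
    shiftEquiv q0 p0 h (MvPolynomial.C a) = MvPolynomial.C a := by
  classical
  show MvPolynomial.aeval _ (MvPolynomial.C a) = _
  rw [MvPolynomial.aeval_C, MvPolynomial.algebraMap_eq]


def EdgeR (src tgt : Fin N → Option (Fin M)) (a b : Fin M) : Prop :=
  ∃ j, src j = some a ∧ tgt j = some b

set_option maxHeartbeats 1000000 in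
theorem inv_ne_iff (src tgt : Fin N → Option (Fin M)) (hnoself : ∀ j, src j ≠ tgt j)
    (hdetP : (Pmat src tgt).det ≠ 0) (m m' : Fin M) :
    ((algebraMap (MvPolynomial (Fin N × Fin M) ℝ)
        (FractionRing (MvPolynomial (Fin N × Fin M) ℝ))).mapMatrix (Pmat src tgt))⁻¹ m' m ≠ 0
      ↔ Relation.ReflTransGen (EdgeR src tgt) m m' := by
  classical
  set ι := algebraMap (MvPolynomial (Fin N × Fin M) ℝ)
    (FractionRing (MvPolynomial (Fin N × Fin M) ℝ)) with hι
  have hιinj : Function.Injective ι := IsFractionRing.injective _ _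
  set A := ι.mapMatrix (Pmat src tgt) with hA
  have hdet : A.det ≠ 0 := by
    rw [hA, ← RingHom.map_det]
    intro h
    exact hdetP (hιinj (h.trans (map_zero ι).symm))
  obtain ⟨F, hF, hnc⟩ := exists_good src tgt hdetP
  have hdiagP : ∀ k, (Pmat src tgt).adjugate k k ≠ 0 := adj_diag_ne src tgt F hF hnc
  constructor
  · intro hne
    by_contra hnr
    apply hne
    refine inv_entry_zero_of_invariant A hdet
      {k | Relation.ReflTransGen (EdgeR src tgt) m k} ?_ Relation.ReflTransGen.refl hnr
    intro k hk i hi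
    have hik : i ≠ k := by
      intro h
      exact hi (h ▸ hk)
    have hzero : (Pmat src tgt) i k = 0 := by
      rw [Pmat]
      simp only [Matrix.of_apply]
      refine Finset.sum_eq_zero fun j _ => ?_
      by_cases hs : src j = some k
      · rw [if_pos hs]
        have hSp : Sp src tgt i j = 0 := by
          rw [Sp_def]
          rw [if_neg (by rw [hs]; simp only [Option.some.injEq]; exact fun h => hik h.symm),
            if_neg, zero_add]
          intro hc
          exact hi (Relation.ReflTransGen.tail hk ⟨j, hs, hc⟩)
        rw [hSp, map_zero, zero_mul]
      · rw [if_neg hs]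
    show ι ((Pmat src tgt) i k) = 0
    rw [hzero, map_zero]
  · intro hreach
    induction hreach using Relation.ReflTransGen.head_induction_on with
    | refl =>
      intro h0
      exact hdiagP m' ((inv_entry_zero_iff ι hιinj _ hdet m' m').mp h0)
    | @head a c hedge htail ih =>
      obtain ⟨j, hsrcj, htgtj⟩ := hedge
      have hac : c ≠ a := by
        intro h
        exact hnoself j (by rw [hsrcj, htgtj, h])
      have hpq : ((j, c) : Fin N × Fin M) ≠ ((j, a) : Fin N × Fin M) := by
        simp [Prod.ext_iff, hac]
      intro hBzero
      set φ := shiftEquiv ((j, a) : Fin N × Fin M) ((j, c) : Fin N × Fin M) hpq with hφ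
      set Φ : MvPolynomial (Fin N × Fin M) ℝ →+* FractionRing (MvPolynomial (Fin N × Fin M) ℝ)
        := ι.comp φ.toAlgHom.toRingHom with hΦ
      have hΦinj : Function.Injective Φ := fun x y hxy => φ.injective (hιinj hxy)
      set A' := Φ.mapMatrix (Pmat src tgt) with hA'
      have hdet' : A'.det ≠ 0 := by
        rw [hA', ← RingHom.map_det]
        intro h
        exact hdetP (hΦinj (h.trans (map_zero Φ).symm))
      -- polynomial-level description of the shifted matrix
      have hshift : ∀ i k, φ ((Pmat src tgt) i k)
          = (Pmat src tgt) i k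
            + (if k = a then MvPolynomial.C (Sp src tgt i j)
                * MvPolynomial.X ((j, c) : Fin N × Fin M) else 0) := by
        intro i k
        rw [Pmat]
        simp only [Matrix.of_apply]
        rw [map_sum]
        have hterm : ∀ j' : Fin N,
            φ (if src j' = some k then MvPolynomial.C (Sp src tgt i j')
                * MvPolynomial.X ((j', k) : Fin N × Fin M) else 0)
            = (if src j' = some k then MvPolynomial.C (Sp src tgt i j')
                * MvPolynomial.X ((j', k) : Fin N × Fin M) else 0)
              + (if j' = j ∧ k = a then MvPolynomial.C (Sp src tgt i j)
                * MvPolynomial.X ((j, c) : Fin N × Fin M) else 0) := by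
          intro j'
          by_cases hs : src j' = some k
          · rw [if_pos hs, map_mul, shiftEquiv_C, shiftEquiv_X]
            by_cases hj : ((j', k) : Fin N × Fin M) = ((j, a) : Fin N × Fin M)
            · have hj1 : j' = j := (Prod.ext_iff.mp hj).1
              have hj2 : k = a := (Prod.ext_iff.mp hj).2
              rw [if_pos hj, if_pos ⟨hj1, hj2⟩, hj1, hj2, mul_add]
            · rw [if_neg hj, if_neg (fun hc => hj (by rw [hc.1, hc.2])), add_zero]
          · rw [if_neg hs, map_zero, zero_add, if_neg]
            rintro ⟨hj1, hj2⟩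
            rw [hj1, hj2] at hs
            exact hs hsrcj
        rw [Finset.sum_congr rfl (fun j' _ => hterm j'), Finset.sum_add_distrib]
        congr 1
        by_cases hk : k = a
        · simp [hk]
        · simp [hk]
      set t : FractionRing (MvPolynomial (Fin N × Fin M) ℝ)
        := ι (MvPolynomial.X ((j, c) : Fin N × Fin M)) with ht
      have htne : t ≠ 0 := by
        rw [ht]
        intro h
        exact MvPolynomial.X_ne_zero _ (hιinj (h.trans (map_zero ι).symm))
      set u : Fin M → FractionRing (MvPolynomial (Fin N × Fin M) ℝ)
        := fun i => ι (MvPolynomial.C (Sp src tgt i j)) with hu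
      have hA'A : A' = A + t • Matrix.vecMulVec u (Pi.single a 1) := by
        ext i k
        show Φ ((Pmat src tgt) i k) = _
        rw [hΦ, RingHom.comp_apply]
        show ι (φ ((Pmat src tgt) i k)) = _
        rw [hshift i k, map_add]
        rw [Matrix.add_apply, Matrix.smul_apply, Matrix.vecMulVec_apply]
        congr 1
        by_cases hk : k = a
        · rw [if_pos hk, map_mul, Pi.single_apply, if_pos hk, mul_one, smul_eq_mul]
          rw [mul_comm]
        · rw [if_neg hk, map_zero, Pi.single_apply, if_neg hk, mul_zero, smul_eq_mul, mul_zero]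
      have hA'B' : A' * A'⁻¹ = 1 := Matrix.mul_nonsing_inv A' (isUnit_iff_ne_zero.mpr hdet')
      have hBA' : A⁻¹ * A' = 1 + t • Matrix.vecMulVec (A⁻¹ *ᵥ u) (Pi.single a 1) := by
        rw [hA'A, Matrix.mul_add, Matrix.nonsing_inv_mul A (isUnit_iff_ne_zero.mpr hdet),
          Matrix.mul_smul]
        congr 1
        congr 1
        ext i k
        rw [Matrix.mul_apply]
        simp only [Matrix.vecMulVec_apply, Matrix.mulVec, dotProduct]
        rw [Finset.sum_mul]
        exact Finset.sum_congr rfl fun l _ => by ring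
      have hfull : A'⁻¹ + t • (Matrix.vecMulVec (A⁻¹ *ᵥ u) (Pi.single a 1) * A'⁻¹) = A⁻¹ := by
        have h1 : (A⁻¹ * A') * A'⁻¹ = A⁻¹ := by
          rw [Matrix.mul_assoc, hA'B', Matrix.mul_one]
        rw [hBA', Matrix.add_mul, Matrix.one_mul, Matrix.smul_mul] at h1
        exact h1
      have hentry := congrFun (congrFun (congrArg (fun (X : Matrix (Fin M) (Fin M)
        (FractionRing (MvPolynomial (Fin N × Fin M) ℝ))) => (X : Fin M → Fin M → _)) hfull) m') a
      simp only [Matrix.add_apply, Matrix.smul_apply, smul_eq_mul] at hentry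
      have houter : (Matrix.vecMulVec (A⁻¹ *ᵥ u) (Pi.single a 1) * A'⁻¹) m' a
          = (A⁻¹ *ᵥ u) m' * A'⁻¹ a a := by
        rw [Matrix.mul_apply]
        rw [Finset.sum_eq_single a]
        · rw [Matrix.vecMulVec_apply, Pi.single_apply, if_pos rfl, mul_one]
        · intro l _ hl
          rw [Matrix.vecMulVec_apply, Pi.single_apply, if_neg hl, mul_zero, zero_mul]
        · intro h
          exact absurd (Finset.mem_univ a) h
      rw [houter] at hentry
      -- B' m' a = 0 and B m' a = 0
      have hdet'P : (Φ.mapMatrix (Pmat src tgt)).det ≠ 0 := hdet'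
      have hdetP2 : (ι.mapMatrix (Pmat src tgt)).det ≠ 0 := hdet
      have hB'zero : A'⁻¹ m' a = 0 :=
        (inv_entry_zero_iff Φ hΦinj (Pmat src tgt) hdet'P m' a).mpr
          ((inv_entry_zero_iff ι hιinj (Pmat src tgt) hdetP2 m' a).mp hBzero)
      rw [hBzero, hB'zero, zero_add] at hentry
      have hB'diag : A'⁻¹ a a ≠ 0 := by
        intro h0
        exact hdiagP a ((inv_entry_zero_iff Φ hΦinj (Pmat src tgt) hdet'P a a).mp h0)
      have hvz : (A⁻¹ *ᵥ u) m' = 0 := by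
        rcases mul_eq_zero.mp hentry with h | h
        · exact absurd h htne
        · rcases mul_eq_zero.mp h with h' | h'
          · exact h'
          · exact absurd h' hB'diag
      -- compute the vector entry
      have hu' : ∀ k, u k = (if k = c then (1 : FractionRing (MvPolynomial (Fin N × Fin M) ℝ))
          else 0) - (if k = a then 1 else 0) := by
        intro k
        simp only [hu]
        rw [Sp_def, hsrcj, htgtj]
        by_cases h1 : k = a <;> by_cases h2 : k = c
        · exact absurd (h2.symm.trans h1) hac
        · rw [if_pos (by rw [h1]), if_neg (by simpa [eq_comm] using h2)]
          simp [h1, h2, Ne.symm hac]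
        · rw [if_neg (by simpa [eq_comm] using h1), if_pos (by rw [h2])]
          simp [h1, h2, hac]
        · rw [if_neg (by simpa [eq_comm] using h1), if_neg (by simpa [eq_comm] using h2)]
          simp [h1, h2]
      have hvc : (A⁻¹ *ᵥ u) m' = A⁻¹ m' c - A⁻¹ m' a := by
        simp only [Matrix.mulVec, dotProduct]
        rw [Finset.sum_congr rfl fun k _ => by rw [hu' k]]
        simp only [mul_sub, mul_ite, mul_one, mul_zero]
        rw [Finset.sum_sub_distrib, Finset.sum_ite_eq' Finset.univ c, Finset.sum_ite_eq'
          Finset.univ a]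
        simp
      rw [hvz, hBzero, sub_zero] at hvc
      exact ih hvc.symm

end Stmt18Aux

set_option maxHeartbeats 2000000 in
/-- In a monomolecular reaction network, metabolite influence is
transitive: if m* is a metabolite and p₁, p₂ are elements (metabolites or
reactions) with m* ⇝ p₁ and p₁ ⇝ p₂, then m* ⇝ p₂. Influence is the algebraically
nonzero response: of concentrations and fluxes to metabolite perturbations
(δx^{m} = -(SR)⁻¹e_m, Φ^{m} = -R(SR)⁻¹e_m) and to reaction perturbations
(δx^{j} = -(SR)⁻¹S e_j, Φ^{j} = (Id - R(SR)⁻¹S)e_j). -/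
theorem stmt18 (M N : ℕ)
    (src tgt : Fin N → Option (Fin M))
    (hnoself : ∀ j, src j ≠ tgt j)
    (S : Matrix (Fin M) (Fin N) ℝ)
    (hS : ∀ i j, S i j =
      (if src j = some i then (-1 : ℝ) else 0) + (if tgt j = some i then 1 else 0))
    (r : Fin N × Fin M → RatFunField (Fin N × Fin M))
    (hr : ∀ p, r p = algebraMap (MvPolynomial (Fin N × Fin M) ℝ) _ (MvPolynomial.X p))
    (R : Matrix (Fin N) (Fin M) (RatFunField (Fin N × Fin M)))
    (hR : ∀ j m, R j m = if src j = some m then r (j, m) else 0)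
    (Sk : Matrix (Fin M) (Fin N) (RatFunField (Fin N × Fin M)))
    (hSk : Sk = S.map (fun x =>
      algebraMap (MvPolynomial (Fin N × Fin M) ℝ) _ (MvPolynomial.C x)))
    (A : Matrix (Fin M) (Fin M) (RatFunField (Fin N × Fin M)))
    (hA : A = Sk * R)
    (hdet : A.det ≠ 0)
    (Infl : (Fin M ⊕ Fin N) → (Fin M ⊕ Fin N) → Prop)
    (hInfl_mm : ∀ m m', Infl (.inl m) (.inl m') ↔ -(A⁻¹ m' m) ≠ 0)
    (hInfl_mj : ∀ m j', Infl (.inl m) (.inr j') ↔ -((R * A⁻¹) j' m) ≠ 0)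
    (hInfl_jm : ∀ j m', Infl (.inr j) (.inl m') ↔ -((A⁻¹ * Sk) m' j) ≠ 0)
    (hInfl_jj : ∀ j j', Infl (.inr j) (.inr j') ↔ ((1 - R * A⁻¹ * Sk : Matrix (Fin N) (Fin N) (RatFunField (Fin N × Fin M))) j' j) ≠ 0)
    (mstar : Fin M) :
    ∀ p₁ p₂ : Fin M ⊕ Fin N,
      Infl (.inl mstar) p₁ → Infl p₁ p₂ → Infl (.inl mstar) p₂ := by

  classical
  set ι := algebraMap (MvPolynomial (Fin N × Fin M) ℝ) (RatFunField (Fin N × Fin M)) with hι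
  have hιinj : Function.Injective ι := IsFractionRing.injective _ _
  have hSp : ∀ i j, S i j = Stmt18Aux.Sp src tgt i j := fun i j => by
    rw [hS i j, Stmt18Aux.Sp_def]
  have hAP : A = ι.mapMatrix (Stmt18Aux.Pmat src tgt) := by
    ext i k
    rw [hA, Matrix.mul_apply]
    show _ = ι ((Stmt18Aux.Pmat src tgt) i k)
    rw [Stmt18Aux.Pmat]
    simp only [Matrix.of_apply]
    rw [map_sum]
    refine Finset.sum_congr rfl fun j _ => ?_
    rw [hSk, hR]
    simp only [Matrix.map_apply]
    by_cases hs : src j = some k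
    · rw [if_pos hs, hr, if_pos hs, map_mul, hSp]
    · rw [if_neg hs, if_neg hs, map_zero, mul_zero]
  have hdetP : (Stmt18Aux.Pmat src tgt).det ≠ 0 := by
    intro h
    apply hdet
    rw [hAP, ← RingHom.map_det, h, map_zero]
  have hchar : ∀ a b : Fin M, A⁻¹ b a ≠ 0
      ↔ Relation.ReflTransGen (Stmt18Aux.EdgeR src tgt) a b := by
    intro a b
    rw [hAP]
    exact Stmt18Aux.inv_ne_iff src tgt hnoself hdetP a b
  -- row structure of R times anything
  have hRgen : ∀ (j' : Fin N) (v : Fin M → RatFunField (Fin N × Fin M)),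
      (∑ k, R j' k * v k)
        = (src j').elim 0 (fun s => ι (MvPolynomial.X ((j', s) : Fin N × Fin M)) * v s) := by
    intro j' v
    rcases hsj : src j' with _ | s
    · refine Finset.sum_eq_zero fun k _ => ?_
      rw [hR, hsj, if_neg (by simp), zero_mul]
    · rw [Finset.sum_eq_single s]
      · rw [hR, hsj, if_pos rfl, hr]
        rfl
      · intro k _ hk
        rw [hR, hsj, if_neg (fun hc => hk (Option.some_inj.mp hc).symm), zero_mul]
      · intro h
        exact absurd (Finset.mem_univ s) h
  have hXne : ∀ (q : Fin N × Fin M), ι (MvPolynomial.X q) ≠ 0 := by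
    intro q h
    exact MvPolynomial.X_ne_zero q (hιinj (h.trans (map_zero ι).symm))
  -- column structure of (anything times Sk)
  have hBSk : ∀ (m0 : Fin M) (j : Fin N), (A⁻¹ * Sk) m0 j
      = (tgt j).elim 0 (fun tt => A⁻¹ m0 tt) - (src j).elim 0 (fun ss => A⁻¹ m0 ss) := by
    intro m0 j
    rw [Matrix.mul_apply]
    have hterm : ∀ k, A⁻¹ m0 k * Sk k j
        = A⁻¹ m0 k * (if tgt j = some k then 1 else 0)
          - A⁻¹ m0 k * (if src j = some k then 1 else 0) := by
      intro k
      rw [hSk]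
      simp only [Matrix.map_apply]
      rw [hS]
      by_cases h1 : src j = some k <;> by_cases h2 : tgt j = some k <;>
        simp [h1, h2] <;> ring
    rw [Finset.sum_congr rfl fun k _ => hterm k, Finset.sum_sub_distrib]
    have hsum : ∀ o : Option (Fin M),
        (∑ k, A⁻¹ m0 k * (if o = some k then (1 : RatFunField (Fin N × Fin M)) else 0))
          = o.elim 0 (fun tt => A⁻¹ m0 tt) := by
      intro o
      rcases o with _ | tt
      · refine Finset.sum_eq_zero fun k _ => by rw [if_neg (by simp), mul_zero]
      · rw [Finset.sum_eq_single tt]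
        · rw [if_pos rfl, mul_one]
          rfl
        · intro k _ hk
          rw [if_neg (fun hc => hk (Option.some_inj.mp hc).symm), mul_zero]
        · intro h
          exact absurd (Finset.mem_univ tt) h
    rw [hsum, hsum]
  -- conversion of influence to reachability
  have convm : ∀ m0 m1 : Fin M, Infl (.inl m0) (.inl m1)
      ↔ Relation.ReflTransGen (Stmt18Aux.EdgeR src tgt) m0 m1 := by
    intro m0 m1
    rw [hInfl_mm, neg_ne_zero, hchar]
  have convj : ∀ (m0 : Fin M) (j' : Fin N), Infl (.inl m0) (.inr j')
      ↔ ∃ s, src j' = some s ∧ Relation.ReflTransGen (Stmt18Aux.EdgeR src tgt) m0 s := by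
    intro m0 j'
    rw [hInfl_mj, neg_ne_zero, Matrix.mul_apply, hRgen j' (fun k => A⁻¹ k m0)]
    rcases hsj : src j' with _ | s
    · simp
    · simp only [Option.elim]
      constructor
      · intro hne
        refine ⟨s, rfl, (hchar m0 s).mp fun h0 => hne ?_⟩
        rw [h0, mul_zero]
      · rintro ⟨s', hs', hrs⟩
        rw [Option.some_inj] at hs'
        rw [← hs'] at hrs
        exact mul_ne_zero (hXne _) ((hchar m0 s).mpr hrs)
  -- from a reaction's influence on a metabolite
  have hjmstep : ∀ (j1 : Fin N) (m2 : Fin M), (A⁻¹ * Sk) m2 j1 ≠ 0 →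
      ∀ s, src j1 = some s → Relation.ReflTransGen (Stmt18Aux.EdgeR src tgt) s m2 := by
    intro j1 m2 hne s hs
    rw [hBSk, hs] at hne
    simp only [Option.elim] at hne
    by_cases hBs : A⁻¹ m2 s ≠ 0
    · exact (hchar s m2).mp hBs
    · push_neg at hBs
      rw [hBs, sub_zero] at hne
      rcases htj : tgt j1 with _ | tt
      · rw [htj] at hne
        simp at hne
      · rw [htj] at hne
        simp only [Option.elim] at hne
        exact Relation.ReflTransGen.head ⟨j1, hs, htj⟩ ((hchar tt m2).mp hne)
  intro p₁ p₂ h1 h2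
  rcases p₁ with m1 | j1
  · rcases p₂ with m2 | j2
    · exact (convm mstar m2).mpr (((convm mstar m1).mp h1).trans ((convm m1 m2).mp h2))
    · obtain ⟨s, hs, hrs⟩ := (convj m1 j2).mp h2
      exact (convj mstar j2).mpr ⟨s, hs, ((convm mstar m1).mp h1).trans hrs⟩
  · obtain ⟨s, hs, hrs⟩ := (convj mstar j1).mp h1
    rcases p₂ with m2 | j2
    · have h2' : (A⁻¹ * Sk) m2 j1 ≠ 0 := neg_ne_zero.mp ((hInfl_jm j1 m2).mp h2)
      exact (convm mstar m2).mpr (hrs.trans (hjmstep j1 m2 h2' s hs))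
    · by_cases hjj : j2 = j1
      · rw [hjj]
        exact h1
      · have h2' : (R * A⁻¹ * Sk) j2 j1 ≠ 0 := by
          intro h0
          apply (hInfl_jj j1 j2).mp h2
          rw [Matrix.sub_apply, h0, Matrix.one_apply_ne hjj, sub_zero]
        rw [Matrix.mul_assoc, Matrix.mul_apply,
          hRgen j2 (fun k => (A⁻¹ * Sk) k j1)] at h2'
        rcases hsj2 : src j2 with _ | s2
        · rw [hsj2] at h2'
          simp at h2'
        · rw [hsj2] at h2'
          simp only [Option.elim] at h2'
          have hne2 : (A⁻¹ * Sk) s2 j1 ≠ 0 := by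
            intro h0
            apply h2'
            rw [h0, mul_zero]
          exact (convj mstar j2).mpr
            ⟨s2, hsj2, hrs.trans (hjmstep j1 s2 hne2 s hs)⟩
end
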